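/- arXiv:2110.14321 — 4 statements merged into one kernel-verified Lean document; each statement's English description precedes it below -/
import Mathlib

section
/- Let the real numbers λ_1,…,λ_n be linearly independent over the field of rational numbers, let c_1,…,c_n be complex numbers, and let f(x)=∑_{k=1}^n c_k e^{iλ_k x}. Then for every x_0 ∈ ℝ and every complex number z with |z| = |f(x_0)|, z belongs both to Δ_+ and to Δ_-; in particular Δ_+ = Δ_- = Δ and this common set contains every circle {z : |z| = |f(x_0)|}, x_0 ∈ ℝ. -/
open Filter Topology

/-- The limit set `Δ₊`: points `z` such that `f (x j) → z` along some sequence `x j → +∞`. -/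
def DeltaPlus (f : ℝ → ℂ) : Set ℂ :=
  {z | ∃ x : ℕ → ℝ, Tendsto x atTop atTop ∧ Tendsto (fun j => f (x j)) atTop (nhds z)}

/-- The limit set `Δ₋`: points `z` such that `f (x j) → z` along some sequence `x j → -∞`. -/
def DeltaMinus (f : ℝ → ℂ) : Set ℂ :=
  {z | ∃ x : ℕ → ℝ, Tendsto x atTop atBot ∧ Tendsto (fun j => f (x j)) atTop (nhds z)}

open Finset

private lemma factor_expand (m : ℕ) (ψ : ℝ) :
    (((2 + 2 * Real.cos ψ : ℝ) : ℂ)) ^ m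
      = ∑ r ∈ Finset.range (2*m+1), (Nat.choose (2*m) r : ℂ) *
          Complex.exp (Complex.I * (((r : ℝ) - m) * ψ : ℝ)) := by
  set E := Complex.exp (ψ * Complex.I) with hE
  have hE0 : E ≠ 0 := Complex.exp_ne_zero _
  have h1 : ((2 + 2 * Real.cos ψ : ℝ) : ℂ) = (1 + E) ^ 2 * E⁻¹ := by
    have h2 : ((2 + 2 * Real.cos ψ : ℝ) : ℂ) = 2 + 2 * Complex.cos ψ := by push_cast; ring
    rw [h2, Complex.two_cos, neg_mul, Complex.exp_neg]
    field_simp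
    ring
  rw [h1, mul_pow, ← pow_mul, mul_comm 2 m, add_comm (1:ℂ) E, add_pow, inv_pow, hE,
    ← Complex.exp_nat_mul, ← Complex.exp_neg, Finset.sum_mul]
  refine Finset.sum_congr rfl fun r hr => ?_
  rw [one_pow, mul_one, ← Complex.exp_nat_mul]
  rw [show Complex.exp (↑r * (↑ψ * Complex.I)) * ((((m*2).choose r : ℕ)):ℂ) * Complex.exp (-(↑m * (↑ψ * Complex.I)))
      = (((m*2).choose r : ℕ):ℂ) * (Complex.exp (↑r * (↑ψ * Complex.I)) * Complex.exp (-(↑m * (↑ψ * Complex.I)))) from by ring,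
    ← Complex.exp_add]
  congr 2
  push_cast
  ring

private lemma kron (n : ℕ) (lam θ : Fin n → ℝ)
    (hindep : ∀ r : Fin n → ℚ, (∑ k, (r k : ℝ) * lam k) = 0 → ∀ k, r k = 0)
    (ε : ℝ) (hε : 0 < ε) (N : ℝ) :
    ∃ x, N ≤ x ∧ ∀ k, ‖
      (Complex.exp (Complex.I * (lam k : ℂ) * (x : ℂ))
        - Complex.exp (Complex.I * (θ k : ℂ)))‖ < ε := by
  rcases Nat.eq_zero_or_pos n with hn0 | hn
  · subst hn0; exact ⟨N, le_rfl, fun k => k.elim0⟩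
  by_contra hcon
  push_neg at hcon
  -- hcon : ∀ x, N ≤ x → ∃ k, ε ≤ abs (...)
  set δ : ℝ := min (ε^2 * 4^(n-1)) 1 with hδdef
  have hδ0 : 0 < δ := lt_min (by positivity) one_pos
  have hδ1 : δ ≤ 1 := min_le_right _ _
  set G : ℝ → ℝ := fun x => ∏ k, (2 + 2 * Real.cos (lam k * x - θ k)) with hGdef
  have hfac0 : ∀ (x : ℝ) (k : Fin n), (0:ℝ) ≤ 2 + 2 * Real.cos (lam k * x - θ k) := by
    intro x k; nlinarith [Real.neg_one_le_cos (lam k * x - θ k)]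
  have hfac4 : ∀ (x : ℝ) (k : Fin n), 2 + 2 * Real.cos (lam k * x - θ k) ≤ 4 := by
    intro x k; nlinarith [Real.cos_le_one (lam k * x - θ k)]
  have hG0 : ∀ x, 0 ≤ G x := fun x => Finset.prod_nonneg fun k _ => hfac0 x k
  set A : ℝ := 4^n - δ with hAdef
  have h4n : (4:ℝ) ≤ 4^n := le_self_pow₀ (by norm_num) (by omega)
  have hA0 : 0 < A := by rw [hAdef]; linarith
  have hA4 : A < 4^n := by rw [hAdef]; linarith
  -- pointwise bound from hcon
  have hGle : ∀ x, N ≤ x → G x ≤ A := by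
    intro x hx
    obtain ⟨k, hk⟩ := hcon x hx
    have hψ : Complex.exp (Complex.I * (lam k : ℂ) * (x : ℂ)) - Complex.exp (Complex.I * (θ k : ℂ))
        = Complex.exp (Complex.I * (θ k : ℂ)) * (Complex.exp (Complex.I * ((lam k * x - θ k : ℝ) : ℂ)) - 1) := by
      rw [mul_sub, mul_one, ← Complex.exp_add]
      congr 2
      push_cast
      ring
    rw [hψ, norm_mul] at hk
    have habs1 : ‖Complex.exp (Complex.I * (θ k : ℂ))‖ = 1 := by
      simp [Complex.norm_exp]
    rw [habs1, one_mul] at hk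
    set ψ := lam k * x - θ k with hψdef
    have hre : Complex.exp (Complex.I * (ψ : ℂ)) - 1
        = ((Real.cos ψ - 1 : ℝ) : ℂ) + ((Real.sin ψ : ℝ) : ℂ) * Complex.I := by
      rw [mul_comm, Complex.exp_mul_I]
      push_cast [Complex.ofReal_cos, Complex.ofReal_sin]
      ring
    have hsq : (‖Complex.exp (Complex.I * (ψ:ℂ)) - 1‖)^2 = 2 - 2 * Real.cos ψ := by
      rw [hre, Complex.sq_norm, Complex.normSq_add_mul_I]
      nlinarith [Real.sin_sq_add_cos_sq ψ]
    have hε2 : ε^2 ≤ 2 - 2 * Real.cos ψ := by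
      rw [← hsq]
      exact pow_le_pow_left₀ hε.le hk 2
    have hfack : 2 + 2 * Real.cos ψ ≤ 4 - ε^2 := by linarith
    have hGb : G x ≤ ∏ j, (if j = k then 4 - ε^2 else (4:ℝ)) := by
      rw [hGdef]
      refine Finset.prod_le_prod (fun j _ => hfac0 x j) (fun j _ => ?_)
      by_cases hjk : j = k
      · rw [if_pos hjk, hjk]; exact hfack
      · rw [if_neg hjk]; exact hfac4 x j
    have hprod : ∏ j, (if j = k then 4 - ε^2 else (4:ℝ)) = (4 - ε^2) * 4^(n-1) := by
      rw [← Finset.mul_prod_erase _ _ (Finset.mem_univ k), if_pos rfl,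
        Finset.prod_congr rfl (fun j hj => if_neg (Finset.ne_of_mem_erase hj)),
        Finset.prod_const, Finset.card_erase_of_mem (Finset.mem_univ k),
        Finset.card_univ, Fintype.card_fin]
    have h4split : (4:ℝ)^n = 4 * 4^(n-1) := by
      rw [← pow_succ']
      congr 1
      omega
    have hδle : δ ≤ ε^2 * 4^(n-1) := min_le_left _ _
    rw [hAdef]
    calc G x ≤ (4 - ε^2) * 4^(n-1) := hGb.trans_eq hprod
      _ = 4^n - ε^2 * 4^(n-1) := by rw [h4split]; ring
      _ ≤ 4^n - δ := by linarith
  -- choose m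
  set q : ℝ := 4^n / A with hqdef
  have hq1 : 1 < q := (one_lt_div hA0).2 hA4
  obtain ⟨m, hmq, hm1⟩ := ((( tendsto_pow_const_div_const_pow_of_one_lt n hq1).eventually
      (gt_mem_nhds (by positivity : (0:ℝ) < ((3:ℝ)^n)⁻¹))).and (eventually_ge_atTop 1)).exists
  have hqm : (0:ℝ) < q^m := pow_pos (lt_trans one_pos hq1) m
  have hmq' : (m:ℝ)^n < ((3:ℝ)^n)⁻¹ * q^m := by
    rw [div_lt_iff₀ hqm] at hmq
    linarith [hmq]
  have hlt : ((2*m+1 : ℕ):ℝ)^n < q^m := by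
    have h3 : (0:ℝ) < 3^n := by positivity
    have hm3 : ((2*m+1:ℕ):ℝ) ≤ 3 * m := by
      push_cast
      have : (1:ℝ) ≤ (m:ℝ) := by exact_mod_cast hm1
      linarith
    calc ((2*m+1:ℕ):ℝ)^n ≤ (3*(m:ℝ))^n := pow_le_pow_left₀ (by positivity) hm3 n
      _ = 3^n * (m:ℝ)^n := mul_pow 3 _ n
      _ < 3^n * (((3:ℝ)^n)⁻¹ * q^m) := by exact mul_lt_mul_of_pos_left hmq' h3
      _ = q^m := by field_simp
  set B : ℝ := ((Nat.choose (2*m) m : ℕ):ℝ)^n with hBdef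
  have hAB : A^m * ((2*m+1:ℕ):ℝ)^n < (4:ℝ)^(n*m) := by
    have hAm : (0:ℝ) < A^m := pow_pos hA0 m
    have : q^m = (4:ℝ)^(n*m) / A^m := by
      rw [hqdef, div_pow, ← pow_mul]
    rw [this] at hlt
    rw [mul_comm]
    exact (lt_div_iff₀ hAm).1 hlt
  have h4B : (4:ℝ)^(n*m) ≤ ((2*m+1:ℕ):ℝ)^n * B := by
    have hnat : (4:ℕ)^m ≤ (2*m+1) * Nat.choose (2*m) m := by
      have hmid : 2*m/2 = m := by omega
      calc (4:ℕ)^m = 2^(2*m) := by rw [pow_mul]; norm_num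
        _ = ∑ i ∈ range (2*m+1), Nat.choose (2*m) i := (Nat.sum_range_choose (2*m)).symm
        _ ≤ ∑ _i ∈ range (2*m+1), Nat.choose (2*m) m := by
            refine Finset.sum_le_sum fun i _ => ?_
            have := Nat.choose_le_middle i (2*m)
            rwa [hmid] at this
        _ = (2*m+1) * Nat.choose (2*m) m := by
            rw [Finset.sum_const, Finset.card_range, smul_eq_mul]
    have hreal : ((4:ℕ)^m : ℝ) ≤ (((2*m+1) * Nat.choose (2*m) m : ℕ) : ℝ) := by
      exact_mod_cast hnat
    push_cast at hreal
    calc (4:ℝ)^(n*m) = ((4:ℝ)^m)^n := by rw [← pow_mul, mul_comm]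
      _ ≤ (((2*m+1:ℕ):ℝ) * (Nat.choose (2*m) m : ℝ))^n := by
          refine pow_le_pow_left₀ (by positivity) ?_ n
          push_cast
          exact hreal
      _ = ((2*m+1:ℕ):ℝ)^n * B := by rw [mul_pow, hBdef]
  have hABlt : A^m < B := by
    have h2 : (0:ℝ) < ((2*m+1:ℕ):ℝ)^n := by positivity
    have h := hAB.trans_le h4B
    rw [mul_comm (A^m) _] at h
    exact lt_of_mul_lt_mul_left h h2.le
  -- multi-index setup
  set R : Finset (Fin n → ℕ) := Fintype.piFinset (fun _ : Fin n => Finset.range (2*m+1)) with hRdef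
  set r₀ : Fin n → ℕ := fun _ => m with hr₀def
  have hr₀R : r₀ ∈ R := by
    rw [hRdef]
    simp only [Fintype.mem_piFinset, Finset.mem_range, hr₀def]
    intro k
    omega
  set CC : (Fin n → ℕ) → ℝ := fun r => ∏ k, (Nat.choose (2*m) (r k) : ℝ) with hCCdef
  set cf : (Fin n → ℕ) → ℝ := fun r => ∑ k, ((r k : ℝ) - m) * lam k with hcfdef
  set dp : (Fin n → ℕ) → ℝ := fun r => ∑ k, ((r k : ℝ) - m) * θ k with hdpdef
  have hCC0 : ∀ r, 0 ≤ CC r := fun r => Finset.prod_nonneg fun k _ => by positivity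
  have hcf0 : cf r₀ = 0 := by simp [hcfdef, hr₀def]
  have hdp0 : dp r₀ = 0 := by simp [hdpdef, hr₀def]
  have hCCr₀ : CC r₀ = ((Nat.choose (2*m) m : ℕ):ℝ)^n := by
    simp [hCCdef, hr₀def, Finset.prod_const, Finset.card_univ]
  have hcfne : ∀ r, r ≠ r₀ → cf r ≠ 0 := by
    intro r hne h0
    apply hne
    have hq : ∑ k, (((fun k => (r k : ℚ) - m) k : ℝ)) * lam k = 0 := by
      rw [← h0, hcfdef]
      refine Finset.sum_congr rfl fun k _ => ?_
      push_cast
      ring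
    have hz := hindep _ hq
    funext k
    have hk := hz k
    have hk2 : (r k : ℚ) = m := by linarith [hk]
    rw [hr₀def]
    exact_mod_cast hk2
  -- expansion identity
  have hexp : ∀ x : ℝ, ((G x ^ m : ℝ) : ℂ)
      = ∑ r ∈ R, (CC r : ℂ) * Complex.exp (Complex.I * ((cf r * x - dp r : ℝ) : ℂ)) := by
    intro x
    have h1 : ((G x ^ m : ℝ):ℂ) = ∏ k, (((2 + 2*Real.cos (lam k * x - θ k) : ℝ):ℂ))^m := by
      rw [hGdef]
      push_cast
      rw [← Finset.prod_pow]
    rw [h1]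
    rw [Finset.prod_congr rfl (fun k _ => factor_expand m (lam k * x - θ k)), Finset.prod_univ_sum]
    rw [hRdef]
    refine Finset.sum_congr rfl fun r hr => ?_
    rw [Finset.prod_mul_distrib, ← Complex.exp_sum]
    congr 1
    · rw [hCCdef]; push_cast; rfl
    · rw [← Finset.mul_sum]
      congr 1
      have hsum : (cf r * x - dp r : ℝ) = ∑ k, ((r k:ℝ) - (m:ℝ)) * (lam k * x - θ k) := by
        rw [hcfdef, hdpdef, Finset.sum_mul, ← Finset.sum_sub_distrib]
        exact Finset.sum_congr rfl fun k _ => by ring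
      rw [hsum]
      push_cast
      rfl
  -- choose T
  set K : ℝ := ∑ r ∈ R.erase r₀, CC r * (2 / |cf r|) with hKdef
  have hK0 : 0 ≤ K := Finset.sum_nonneg fun r hr => mul_nonneg (hCC0 r) (by positivity)
  have hBA : 0 < B - A^m := sub_pos.2 hABlt
  set T : ℝ := max 1 ((K+1)/(B - A^m)) with hTdef
  have hT1 : (1:ℝ) ≤ T := le_max_left _ _
  have hT0 : 0 < T := lt_of_lt_of_le one_pos hT1
  have hTK : K + 1 ≤ T * (B - A^m) := by
    have h := le_max_right 1 ((K+1)/(B - A^m))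
    calc K + 1 = ((K+1)/(B - A^m)) * (B - A^m) := by field_simp
      _ ≤ T * (B - A^m) := mul_le_mul_of_nonneg_right h hBA.le
  have hab : N ≤ N + T := by linarith
  -- integrability
  have contG : Continuous G := by
    rw [hGdef]
    exact continuous_finset_prod _ fun k _ => by fun_prop
  have intGm : IntervalIntegrable (fun x => G x ^ m) MeasureTheory.volume N (N+T) :=
    (contG.pow m).intervalIntegrable _ _
  have intE : ∀ r : Fin n → ℕ, IntervalIntegrable
      (fun x : ℝ => Complex.exp (Complex.I * ((cf r * x - dp r : ℝ) : ℂ))) MeasureTheory.volume N (N+T) := by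
    intro r
    apply Continuous.intervalIntegrable
    fun_prop
  -- integral identity
  have hIcast : ((∫ x in N..(N+T), G x ^ m : ℝ) : ℂ)
      = ∑ r ∈ R, (CC r:ℂ) * ∫ x in N..(N+T), Complex.exp (Complex.I * ((cf r * x - dp r : ℝ) : ℂ)) := by
    rw [← intervalIntegral.integral_ofReal,
      intervalIntegral.integral_congr (g := fun x => ∑ r ∈ R, (CC r : ℂ) * Complex.exp (Complex.I * ((cf r * x - dp r : ℝ) : ℂ))) (fun x _ => hexp x),
      intervalIntegral.integral_finset_sum (fun r _ => ((intE r).const_mul _))]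
    exact Finset.sum_congr rfl fun r _ => intervalIntegral.integral_const_mul _ _
  have hImain : (∫ x in N..(N+T), Complex.exp (Complex.I * ((cf r₀ * x - dp r₀ : ℝ) : ℂ))) = (T:ℂ) := by
    rw [hcf0, hdp0]
    simp only [zero_mul, sub_zero, Complex.ofReal_zero, mul_zero, Complex.exp_zero]
    rw [intervalIntegral.integral_const]
    simp [Complex.real_smul]
  have hIbound : ∀ r ∈ R.erase r₀, ‖
      (∫ x in N..(N+T), Complex.exp (Complex.I * ((cf r * x - dp r : ℝ) : ℂ)))‖ ≤ 2 / |cf r| := by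
    intro r hr
    have hc : cf r ≠ 0 := hcfne r (Finset.ne_of_mem_erase hr)
    have hIc : Complex.I * (cf r : ℂ) ≠ 0 :=
      mul_ne_zero Complex.I_ne_zero (by exact_mod_cast hc)
    have hrw : ∀ x : ℝ, Complex.exp (Complex.I * ((cf r * x - dp r : ℝ) : ℂ))
        = Complex.exp (Complex.I * ((-dp r : ℝ) : ℂ)) * Complex.exp ((Complex.I * (cf r : ℂ)) * (x : ℂ)) := by
      intro x
      rw [← Complex.exp_add]
      congr 1
      push_cast
      ring
    rw [intervalIntegral.integral_congr (fun x _ => hrw x), intervalIntegral.integral_const_mul,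
      integral_exp_mul_complex hIc, norm_mul]
    have h1 : ‖Complex.exp (Complex.I * ((-dp r : ℝ) : ℂ))‖ = 1 := by
      simp [Complex.norm_exp]
    have h2 : ‖Complex.exp (Complex.I * (cf r:ℂ) * ((N+T : ℝ):ℂ)) - Complex.exp (Complex.I * (cf r:ℂ) * ((N:ℝ):ℂ))‖ ≤ 2 := by
      have ht := norm_sub_le (Complex.exp (Complex.I * (cf r:ℂ) * ((N+T:ℝ):ℂ))) (Complex.exp (Complex.I * (cf r:ℂ) * ((N:ℝ):ℂ)))
      have ha : ‖Complex.exp (Complex.I * (cf r:ℂ) * ((N+T:ℝ):ℂ))‖ = 1 := by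
        simp [Complex.norm_exp]
      have hb : ‖Complex.exp (Complex.I * (cf r:ℂ) * ((N:ℝ):ℂ))‖ = 1 := by
        simp [Complex.norm_exp]
      rw [ha, hb] at ht
      linarith
    have hden : ‖Complex.I * (cf r : ℂ)‖ = |cf r| := by
      simp [norm_mul]
    rw [h1, one_mul, norm_div, hden]
    have hpos : 0 < |cf r| := abs_pos.2 hc
    exact div_le_div₀ (by norm_num) h2 hpos le_rfl
  -- lower bound for the integral
  have hlow : T * B - K ≤ ∫ x in N..(N+T), G x ^ m := by
    have h0 : (∫ x in N..(N+T), G x ^ m)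
        = (∑ r ∈ R, (CC r:ℂ) * ∫ x in N..(N+T), Complex.exp (Complex.I * ((cf r * x - dp r : ℝ):ℂ))).re := by
      rw [← hIcast, Complex.ofReal_re]
    rw [h0, ← Finset.add_sum_erase _ _ hr₀R, hImain]
    set rest : ℂ := ∑ r ∈ R.erase r₀, (CC r:ℂ) * ∫ x in N..(N+T), Complex.exp (Complex.I * ((cf r * x - dp r : ℝ):ℂ)) with hrest
    have habs : ‖rest‖ ≤ K := by
      rw [hrest, hKdef]
      calc ‖∑ r ∈ R.erase r₀, (CC r:ℂ) * ∫ x in N..(N+T), Complex.exp (Complex.I * ((cf r * x - dp r : ℝ):ℂ))‖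
          ≤ ∑ r ∈ R.erase r₀, ‖(CC r:ℂ) * ∫ x in N..(N+T), Complex.exp (Complex.I * ((cf r * x - dp r : ℝ):ℂ))‖ := by
            exact norm_sum_le (R.erase r₀)
              (fun r => (CC r:ℂ) * ∫ x in N..(N+T), Complex.exp (Complex.I * ((cf r * x - dp r : ℝ):ℂ)))
        _ ≤ ∑ r ∈ R.erase r₀, CC r * (2 / |cf r|) := Finset.sum_le_sum fun r hr => by
            rw [norm_mul, Complex.norm_real, Real.norm_of_nonneg (hCC0 r)]
            exact mul_le_mul_of_nonneg_left (hIbound r hr) (hCC0 r)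
    have hrre : -K ≤ rest.re := by
      have h1 := Complex.abs_re_le_norm rest
      have h2 := neg_abs_le rest.re
      linarith
    have hterm : (((CC r₀ :ℝ):ℂ) * ((T:ℝ):ℂ)).re = CC r₀ * T := by
      rw [← Complex.ofReal_mul, Complex.ofReal_re]
    rw [Complex.add_re, hterm, hCCr₀, ← hBdef]
    linarith
  -- upper bound for the integral
  have hup : (∫ x in N..(N+T), G x ^ m) ≤ T * A^m := by
    have hmono : ∀ x ∈ Set.Icc N (N+T), G x ^ m ≤ A^m :=
      fun x hx => pow_le_pow_left₀ (hG0 x) (hGle x hx.1) m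
    calc (∫ x in N..(N+T), G x ^ m) ≤ ∫ _x in N..(N+T), A^m :=
          intervalIntegral.integral_mono_on hab intGm intervalIntegrable_const hmono
      _ = T * A^m := by rw [intervalIntegral.integral_const, smul_eq_mul, add_sub_cancel_left]
  rw [mul_sub] at hTK
  linarith
/-- approximation on [N, ∞): f gets within ε of exp(Iα) * f x₀ -/
private lemma approx_plus (n : ℕ) (lam : Fin n → ℝ) (c : Fin n → ℂ)
    (hindep : ∀ r : Fin n → ℚ, (∑ k, (r k : ℝ) * lam k) = 0 → ∀ k, r k = 0)
    (f : ℝ → ℂ)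
    (hf : ∀ x : ℝ, f x = ∑ k, c k * Complex.exp (Complex.I * (lam k : ℂ) * (x : ℂ)))
    (x₀ α : ℝ) (ε : ℝ) (hε : 0 < ε) (N : ℝ) :
    ∃ x, N ≤ x ∧ ‖f x - Complex.exp (Complex.I * (α:ℂ)) * f x₀‖ < ε := by
  set S : ℝ := ∑ k, ‖c k‖ with hSdef
  have hS0 : 0 ≤ S := Finset.sum_nonneg fun k _ => norm_nonneg _
  have hε' : 0 < ε / (S + 1) := by positivity
  obtain ⟨x, hx, hk⟩ := kron n lam (fun k => lam k * x₀ + α) hindep (ε / (S+1)) hε' N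
  refine ⟨x, hx, ?_⟩
  have hz : Complex.exp (Complex.I * (α:ℂ)) * f x₀
      = ∑ k, c k * Complex.exp (Complex.I * ((lam k * x₀ + α : ℝ) : ℂ)) := by
    rw [hf x₀, Finset.mul_sum]
    refine Finset.sum_congr rfl fun k _ => ?_
    rw [show Complex.exp (Complex.I * (α:ℂ)) * (c k * Complex.exp (Complex.I * (lam k : ℂ) * (x₀:ℂ)))
        = c k * (Complex.exp (Complex.I * (lam k:ℂ) * (x₀:ℂ)) * Complex.exp (Complex.I * (α:ℂ))) from by ring,
      ← Complex.exp_add]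
    congr 2
    push_cast
    ring
  rw [hf x, hz, ← Finset.sum_sub_distrib]
  calc ‖∑ k, (c k * Complex.exp (Complex.I * (lam k:ℂ) * (x:ℂ))
          - c k * Complex.exp (Complex.I * ((lam k * x₀ + α : ℝ):ℂ)))‖
      ≤ ∑ k, ‖c k * Complex.exp (Complex.I * (lam k:ℂ) * (x:ℂ))
          - c k * Complex.exp (Complex.I * ((lam k * x₀ + α : ℝ):ℂ))‖ := by
        exact norm_sum_le Finset.univ
          (fun k => c k * Complex.exp (Complex.I * (lam k:ℂ) * (x:ℂ))
            - c k * Complex.exp (Complex.I * ((lam k * x₀ + α : ℝ):ℂ)))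
    _ ≤ ∑ k, ‖c k‖ * (ε / (S+1)) := by
        refine Finset.sum_le_sum fun k _ => ?_
        rw [← mul_sub, norm_mul]
        exact mul_le_mul_of_nonneg_left (le_of_lt (hk k)) (norm_nonneg _)
    _ = S * (ε / (S+1)) := by rw [← Finset.sum_mul]
    _ < ε := by
        rw [div_eq_inv_mul, ← mul_assoc]
        have h1 : S * (S+1)⁻¹ < 1 := by
          rw [mul_inv_lt_iff₀ (by linarith)]
          linarith
        nlinarith

private lemma approx_minus (n : ℕ) (lam : Fin n → ℝ) (c : Fin n → ℂ)
    (hindep : ∀ r : Fin n → ℚ, (∑ k, (r k : ℝ) * lam k) = 0 → ∀ k, r k = 0)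
    (f : ℝ → ℂ)
    (hf : ∀ x : ℝ, f x = ∑ k, c k * Complex.exp (Complex.I * (lam k : ℂ) * (x : ℂ)))
    (x₀ α : ℝ) (ε : ℝ) (hε : 0 < ε) (N : ℝ) :
    ∃ x, x ≤ N ∧ ‖f x - Complex.exp (Complex.I * (α:ℂ)) * f x₀‖ < ε := by
  have hindep' : ∀ r : Fin n → ℚ, (∑ k, (r k : ℝ) * (-lam k)) = 0 → ∀ k, r k = 0 := by
    intro r hr k
    have h0 : ∑ j, (((fun j => -r j) j : ℚ) : ℝ) * lam j = 0 := by
      rw [← hr]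
      refine Finset.sum_congr rfl fun j _ => ?_
      push_cast
      ring
    have := hindep (fun j => -r j) h0 k
    simpa using this
  have hg : ∀ x : ℝ, (fun y => f (-y)) x = ∑ k, c k * Complex.exp (Complex.I * ((-lam k : ℝ) : ℂ) * (x : ℂ)) := by
    intro x
    simp only
    rw [hf (-x)]
    refine Finset.sum_congr rfl fun k _ => ?_
    congr 1
    push_cast
    ring
  obtain ⟨y, hy, hfy⟩ := approx_plus n (fun k => -lam k) c hindep' (fun y => f (-y)) hg (-x₀) α ε hε (-N)
  exact ⟨-y, by linarith, by simpa using hfy⟩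

private lemma mem_plus (f : ℝ → ℂ) (z : ℂ)
    (h : ∀ ε : ℝ, 0 < ε → ∀ N : ℝ, ∃ x, N ≤ x ∧ dist (f x) z < ε) : z ∈ DeltaPlus f := by
  choose x hx hd using fun j : ℕ => h (1/(j+1)) (by positivity) j
  refine ⟨x, tendsto_atTop_mono hx tendsto_natCast_atTop_atTop, ?_⟩
  rw [tendsto_iff_dist_tendsto_zero]
  exact squeeze_zero (fun j => dist_nonneg) (fun j => (hd j).le)
    tendsto_one_div_add_atTop_nhds_zero_nat

private lemma mem_minus (f : ℝ → ℂ) (z : ℂ)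
    (h : ∀ ε : ℝ, 0 < ε → ∀ N : ℝ, ∃ x, x ≤ N ∧ dist (f x) z < ε) : z ∈ DeltaMinus f := by
  choose x hx hd using fun j : ℕ => h (1/(j+1)) (by positivity) (-(j:ℝ))
  refine ⟨x, tendsto_atBot_mono hx
    (tendsto_neg_atTop_atBot.comp tendsto_natCast_atTop_atTop), ?_⟩
  rw [tendsto_iff_dist_tendsto_zero]
  exact squeeze_zero (fun j => dist_nonneg) (fun j => (hd j).le)
    tendsto_one_div_add_atTop_nhds_zero_nat

theorem stmt_0 (n : ℕ) (lam : Fin n → ℝ) (c : Fin n → ℂ)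
    (hindep : ∀ r : Fin n → ℚ, (∑ k, (r k : ℝ) * lam k) = 0 → ∀ k, r k = 0)
    (f : ℝ → ℂ)
    (hf : ∀ x : ℝ, f x = ∑ k, c k * Complex.exp (Complex.I * (lam k : ℂ) * (x : ℂ))) :
    (∀ x₀ : ℝ, ∀ z : ℂ, ‖z‖ = ‖f x₀‖ →
      z ∈ DeltaPlus f ∧ z ∈ DeltaMinus f) ∧
    DeltaPlus f = DeltaMinus f := by
  have hAP : ∀ (x₀ α : ℝ), Complex.exp (Complex.I * (α:ℂ)) * f x₀ ∈ DeltaPlus f := by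
    intro x₀ α
    refine mem_plus f _ (fun ε hε N => ?_)
    obtain ⟨x, hx, hd⟩ := approx_plus n lam c hindep f hf x₀ α ε hε N
    exact ⟨x, hx, by rwa [Complex.dist_eq]⟩
  have hAM : ∀ (x₀ α : ℝ), Complex.exp (Complex.I * (α:ℂ)) * f x₀ ∈ DeltaMinus f := by
    intro x₀ α
    refine mem_minus f _ (fun ε hε N => ?_)
    obtain ⟨x, hx, hd⟩ := approx_minus n lam c hindep f hf x₀ α ε hε N
    exact ⟨x, hx, by rwa [Complex.dist_eq]⟩
  constructor
  · intro x₀ z hz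
    obtain ⟨α, hα⟩ : ∃ α : ℝ, Complex.exp (Complex.I * (α:ℂ)) * f x₀ = z := by
      by_cases h0 : f x₀ = 0
      · refine ⟨0, ?_⟩
        have hz0 : z = 0 := by
          have h1 : ‖z‖ = 0 := by rw [hz, h0, norm_zero]
          exact norm_eq_zero.1 h1
        rw [h0, hz0, mul_zero]
      · have h1 : ‖z / f x₀‖ = 1 := by
          rw [norm_div, hz, div_self (norm_ne_zero_iff.2 h0)]
        obtain ⟨θ, hθ⟩ := (Complex.norm_eq_one_iff _).1 h1
        refine ⟨θ, ?_⟩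
        rw [mul_comm Complex.I ((θ:ℝ):ℂ), hθ, div_mul_cancel₀ _ h0]
    exact hα ▸ ⟨hAP x₀ α, hAM x₀ α⟩
  · ext z
    constructor
    · rintro ⟨x, hx, hfx⟩
      refine mem_minus f z (fun ε hε N => ?_)
      obtain ⟨j₀, hj₀⟩ := Metric.tendsto_atTop.1 hfx (ε/2) (half_pos hε)
      have hj := hj₀ j₀ le_rfl
      obtain ⟨y, hy, hdy⟩ := approx_minus n lam c hindep f hf (x j₀) 0 (ε/2) (half_pos hε) N
      refine ⟨y, hy, ?_⟩
      rw [show Complex.exp (Complex.I * ((0:ℝ):ℂ)) * f (x j₀) = f (x j₀) from by simp] at hdy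
      calc dist (f y) z ≤ dist (f y) (f (x j₀)) + dist (f (x j₀)) z := dist_triangle _ _ _
        _ < ε/2 + ε/2 := add_lt_add (by rwa [Complex.dist_eq]) hj
        _ = ε := add_halves ε
    · rintro ⟨x, hx, hfx⟩
      refine mem_plus f z (fun ε hε N => ?_)
      obtain ⟨j₀, hj₀⟩ := Metric.tendsto_atTop.1 hfx (ε/2) (half_pos hε)
      have hj := hj₀ j₀ le_rfl
      obtain ⟨y, hy, hdy⟩ := approx_plus n lam c hindep f hf (x j₀) 0 (ε/2) (half_pos hε) N
      refine ⟨y, hy, ?_⟩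
      rw [show Complex.exp (Complex.I * ((0:ℝ):ℂ)) * f (x j₀) = f (x j₀) from by simp] at hdy
      calc dist (f y) z ≤ dist (f y) (f (x j₀)) + dist (f (x j₀)) z := dist_triangle _ _ _
        _ < ε/2 + ε/2 := add_lt_add (by rwa [Complex.dist_eq]) hj
        _ = ε := add_halves ε
end

section
/- Let the real numbers λ_1,…,λ_n be linearly independent over the field of rational numbers, let c_1,…,c_n be complex numbers, and let f(x)=∑_{k=1}^n c_k e^{iλ_k x}. Then sup_{x∈ℝ} |f(x)| = ∑_{k=1}^n |c_k|. -/
open Filter Topology intervalIntegral Finset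

private lemma mean_exp (μ : ℝ) :
    Tendsto (fun T : ℝ => (∫ x in (-T)..T, Complex.exp (Complex.I * μ * x)) / ((2*T : ℝ) : ℂ))
      atTop (𝓝 (if μ = 0 then (1:ℂ) else 0)) := by
  rcases eq_or_ne μ 0 with h | h
  · simp only [h, if_pos rfl]
    have key : ∀ᶠ T : ℝ in atTop,
        (∫ x in (-T)..T, Complex.exp (Complex.I * (0:ℝ) * x)) / ((2*T : ℝ) : ℂ) = 1 := by
      filter_upwards [eventually_gt_atTop (0:ℝ)] with T hT
      have : (∫ x in (-T)..T, Complex.exp (Complex.I * (0:ℝ) * x))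
          = ∫ x in (-T)..T, (1:ℂ) := by
        apply intervalIntegral.integral_congr; intro x _; simp
      rw [this, intervalIntegral.integral_const]
      have h2c : ((2*T:ℝ) : ℂ) ≠ 0 := by
        exact_mod_cast ne_of_gt (by positivity : (0:ℝ) < 2*T)
      rw [div_eq_one_iff_eq h2c]
      push_cast
      simp [smul_eq_mul]
      ring
    rw [tendsto_congr' key]
    exact tendsto_const_nhds
  · simp only [if_neg h]
    have hc : (Complex.I * μ : ℂ) ≠ 0 := by
      simp [Complex.I_ne_zero, Complex.ofReal_eq_zero, h]
    apply squeeze_zero_norm' (a := fun T : ℝ => (2 / |μ|) * T⁻¹ / 2)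
    · filter_upwards [eventually_gt_atTop (0:ℝ)] with T hT
      rw [integral_exp_mul_complex hc]
      have habs : ∀ s : ℝ, ‖Complex.exp (Complex.I * μ * s)‖ = 1 := by
        intro s
        rw [Complex.norm_exp]
        simp [Complex.mul_re, Complex.I_re, Complex.I_im]
      have hnum : ‖Complex.exp (Complex.I * ↑μ * ↑T) - Complex.exp (Complex.I * ↑μ * ↑(-T))‖ ≤ 2 := by
        calc ‖Complex.exp (Complex.I * ↑μ * ↑T) - Complex.exp (Complex.I * ↑μ * ↑(-T))‖
            ≤ ‖Complex.exp (Complex.I * ↑μ * ↑T)‖ + ‖Complex.exp (Complex.I * ↑μ * ↑(-T))‖ :=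
              norm_sub_le _ _
          _ ≤ 2 := by rw [habs, habs]; norm_num
      have hden : ‖Complex.I * ↑μ‖ = |μ| := by
        simp [map_mul]
      rw [norm_div, norm_div, hden]
      rw [Complex.norm_real, Real.norm_eq_abs]
      have h2T : |2 * T| = 2 * T := abs_of_pos (by linarith)
      rw [h2T]
      rw [div_div]
      have hμ : (0:ℝ) < |μ| := abs_pos.mpr h
      have : 2 / |μ| * T⁻¹ / 2 = 2 / (|μ| * (2 * T)) := by
        field_simp
      rw [this]
      exact div_le_div_of_nonneg_right hnum (by positivity) |>.trans le_rfl
    · have : Tendsto (fun T : ℝ => T⁻¹) atTop (𝓝 0) := tendsto_inv_atTop_zero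
      have := (this.const_mul (2 / |μ|)).div_const 2
      simpa using this

private lemma mean_sum {ι : Type*} [Fintype ι] (a : ι → ℂ) (μ : ι → ℝ) :
    Tendsto (fun T : ℝ =>
        (∫ x in (-T)..T, ∑ i, a i * Complex.exp (Complex.I * μ i * x)) / ((2*T:ℝ):ℂ))
      atTop (𝓝 (∑ i, a i * if μ i = 0 then 1 else 0)) := by
  have h1 : ∀ T : ℝ, (∫ x in (-T)..T, ∑ i, a i * Complex.exp (Complex.I * μ i * x))
      = ∑ i, a i * ∫ x in (-T)..T, Complex.exp (Complex.I * μ i * x) := by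
    intro T
    rw [intervalIntegral.integral_finset_sum]
    · exact Finset.sum_congr rfl fun i _ => intervalIntegral.integral_const_mul _ _
    · intro i _
      exact Continuous.intervalIntegrable (by continuity) _ _
  have h2 : ∀ T : ℝ,
      (∫ x in (-T)..T, ∑ i, a i * Complex.exp (Complex.I * μ i * x)) / ((2*T:ℝ):ℂ)
      = ∑ i, a i * ((∫ x in (-T)..T, Complex.exp (Complex.I * μ i * x)) / ((2*T:ℝ):ℂ)) := by
    intro T
    rw [h1, Finset.sum_div]
    exact Finset.sum_congr rfl fun i _ => (mul_div_assoc _ _ _)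
  simp only [h2]
  exact tendsto_finset_sum _ fun i _ => (mean_exp (μ i)).const_mul (a i)

private lemma key_ineq (n : ℕ) (lam : Fin n → ℝ) (c : Fin n → ℂ)
    (hindep : ∀ r : Fin n → ℚ, (∑ k, (r k : ℝ) * lam k) = 0 → ∀ k, r k = 0)
    (S : ℝ)
    (hS : ∀ x : ℝ, ‖∑ k, c k * Complex.exp (Complex.I * (lam k : ℂ) * (x : ℂ))‖ ≤ S)
    (m : ℕ) :
    (∑ k, ‖c k‖) ^ (2*m) ≤ ((m+1:ℕ):ℝ)^n * S^(2*m) := by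
  classical
  set F : ℝ → ℂ := fun x => ∑ k, c k * Complex.exp (Complex.I * (lam k : ℂ) * (x : ℂ)) with hFdef
  have hFcont : Continuous F := by
    apply continuous_finset_sum
    intro k _
    exact continuous_const.mul (Complex.continuous_exp.comp (by fun_prop))
  have hSnn : 0 ≤ S := le_trans (norm_nonneg _) (hS 0)
  set A : (Fin m → Fin n) → ℂ := fun d => ∏ j, c (d j) with hAdef
  set Lam : (Fin m → Fin n) → ℝ := fun d => ∑ j, lam (d j) with hLamdef
  set cnt : (Fin m → Fin n) → (Fin n → ℕ) :=
    fun d k => (Finset.univ.filter fun j => d j = k).card with hcntdef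
  set t : (Fin m → Fin n) → ℝ := fun d => ∏ j, ‖c (d j)‖ with htdef
  -- power expansion
  have hpow : ∀ x : ℝ, F x ^ m = ∑ d : Fin m → Fin n, A d * Complex.exp (Complex.I * Lam d * x) := by
    intro x
    have h1 : F x ^ m = ∏ _j : Fin m, F x := by
      rw [Finset.prod_const, Finset.card_univ, Fintype.card_fin]
    rw [h1]
    simp only [hFdef]
    rw [Finset.prod_univ_sum]
    rw [Fintype.piFinset_univ]
    refine Finset.sum_congr rfl fun d _ => ?_
    rw [Finset.prod_mul_distrib, ← Complex.exp_sum]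
    congr 1
    rw [← Finset.sum_mul, ← Finset.mul_sum]
    push_cast [hLamdef]
    ring
  have hconj : ∀ x : ℝ, (starRingEnd ℂ) (F x) ^ m
      = ∑ e : Fin m → Fin n, (starRingEnd ℂ) (A e) * Complex.exp (Complex.I * (-Lam e : ℝ) * x) := by
    intro x
    rw [← map_pow, hpow x, map_sum]
    refine Finset.sum_congr rfl fun d _ => ?_
    rw [map_mul, ← Complex.exp_conj]
    congr 1
    simp only [map_mul, Complex.conj_I, Complex.conj_ofReal]
    push_cast
    ring
  have hsq : ∀ x : ℝ, ((‖F x‖ ^ (2*m) : ℝ) : ℂ)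
      = ∑ p : (Fin m → Fin n) × (Fin m → Fin n),
          (A p.1 * (starRingEnd ℂ) (A p.2)) * Complex.exp (Complex.I * ((Lam p.1 - Lam p.2 : ℝ) : ℂ) * x) := by
    intro x
    have h0 : ((‖F x‖ ^ (2*m) : ℝ) : ℂ) = F x ^ m * (starRingEnd ℂ) (F x) ^ m := by
      rw [pow_mul, Complex.ofReal_pow, ← Complex.normSq_eq_norm_sq, ← Complex.mul_conj, mul_pow]
    rw [h0, hpow, hconj, Finset.sum_mul_sum, Fintype.sum_prod_type]
    refine Finset.sum_congr rfl fun d _ => Finset.sum_congr rfl fun e _ => ?_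
    rw [mul_mul_mul_comm, ← Complex.exp_add]
    congr 2
    push_cast
    ring
  -- the mean value L
  set L : ℂ := ∑ p : (Fin m → Fin n) × (Fin m → Fin n),
      (A p.1 * (starRingEnd ℂ) (A p.2)) * (if Lam p.1 - Lam p.2 = 0 then 1 else 0) with hLdef
  have hmean := mean_sum (fun p : (Fin m → Fin n) × (Fin m → Fin n) => A p.1 * (starRingEnd ℂ) (A p.2))
      (fun p => Lam p.1 - Lam p.2)
  have hint_eq : ∀ T : ℝ,
      (∫ x in (-T)..T, ∑ p : (Fin m → Fin n) × (Fin m → Fin n),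
          (A p.1 * (starRingEnd ℂ) (A p.2)) * Complex.exp (Complex.I * ((Lam p.1 - Lam p.2 : ℝ) : ℂ) * x))
      = ((∫ x in (-T)..T, ‖F x‖ ^ (2*m) : ℝ) : ℂ) := by
    intro T
    rw [← intervalIntegral.integral_ofReal]
    apply intervalIntegral.integral_congr
    intro x _
    exact (hsq x).symm
  have hmean2 : Tendsto (fun T : ℝ =>
      (∫ x in (-T)..T, ‖F x‖ ^ (2*m)) / (2*T)) atTop (𝓝 L.re) := by
    have h2 := (Complex.continuous_re.tendsto _).comp hmean
    simp only [Function.comp_def, hint_eq, ← Complex.ofReal_div, Complex.ofReal_re] at h2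
    exact h2
  -- upper bound on L.re
  have hint : ∀ T : ℝ, IntervalIntegrable (fun x => ‖F x‖^(2*m)) MeasureTheory.volume (-T) T := by
    intro T
    exact ((continuous_norm.comp hFcont).pow _).intervalIntegrable _ _
  have hLre_le : L.re ≤ S ^ (2*m) := by
    refine le_of_tendsto hmean2 ?_
    filter_upwards [eventually_gt_atTop (0:ℝ)] with T hT
    have hle : (∫ x in (-T)..T, ‖F x‖^(2*m)) ≤ ∫ _x in (-T)..T, S^(2*m) := by
      apply intervalIntegral.integral_mono_on (by linarith) (hint T) intervalIntegrable_const
      intro x _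
      exact pow_le_pow_left₀ (norm_nonneg _) (hS x) _
    rw [intervalIntegral.integral_const, smul_eq_mul] at hle
    rw [div_le_iff₀ (by linarith)]
    calc (∫ x in (-T)..T, ‖F x‖^(2*m)) ≤ (T - -T) * S^(2*m) := hle
      _ = S^(2*m) * (2*T) := by ring
  -- counting identities
  have hLam : ∀ d, Lam d = ∑ k, (cnt d k : ℝ) * lam k := by
    intro d
    simp only [hLamdef]
    rw [← Finset.sum_fiberwise Finset.univ d (fun j => lam (d j))]
    refine Finset.sum_congr rfl fun k _ => ?_
    rw [Finset.sum_congr rfl (fun j hj => by rw [(Finset.mem_filter.mp hj).2] : ∀ j ∈ Finset.univ.filter (fun j => d j = k), lam (d j) = lam k),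
      Finset.sum_const, nsmul_eq_mul]
  have hA : ∀ d, A d = ∏ k, c k ^ cnt d k := by
    intro d
    simp only [hAdef]
    rw [← Finset.prod_fiberwise Finset.univ d (fun j => c (d j))]
    refine Finset.prod_congr rfl fun k _ => ?_
    rw [Finset.prod_congr rfl (fun j hj => by rw [(Finset.mem_filter.mp hj).2] : ∀ j ∈ Finset.univ.filter (fun j => d j = k), c (d j) = c k),
      Finset.prod_const]
  have ht : ∀ d, t d = ∏ k, ‖c k‖ ^ cnt d k := by
    intro d
    simp only [htdef]
    rw [← Finset.prod_fiberwise Finset.univ d (fun j => ‖c (d j)‖)]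
    refine Finset.prod_congr rfl fun k _ => ?_
    rw [Finset.prod_congr rfl (fun j hj => by rw [(Finset.mem_filter.mp hj).2] : ∀ j ∈ Finset.univ.filter (fun j => d j = k), ‖c (d j)‖ = ‖c k‖),
      Finset.prod_const]
  have h_iff : ∀ d e, Lam d - Lam e = 0 ↔ cnt d = cnt e := by
    intro d e
    constructor
    · intro h0
      have hr := hindep (fun k => (cnt d k : ℚ) - (cnt e k : ℚ)) ?_
      · funext k
        have := hr k
        have h2 : (cnt d k : ℚ) = (cnt e k : ℚ) := by linarith [sub_eq_zero.mp this]
        exact_mod_cast h2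
      · have heq : ∑ k, ((((cnt d k : ℚ) - (cnt e k : ℚ)) : ℚ) : ℝ) * lam k
            = (∑ k, (cnt d k : ℝ) * lam k) - ∑ k, (cnt e k : ℝ) * lam k := by
          rw [← Finset.sum_sub_distrib]
          refine Finset.sum_congr rfl fun k _ => ?_
          push_cast
          ring
        rw [heq, ← hLam d, ← hLam e]
        exact h0
    · intro h0
      rw [hLam d, hLam e, h0, sub_self]
  have habsA : ∀ d, ‖A d‖ = t d := by
    intro d
    simp only [hAdef, htdef]
    exact Complex.norm_prod _ _
  -- L.re as a sum of products
  have hLre : L.re = ∑ p : (Fin m → Fin n) × (Fin m → Fin n),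
      (if cnt p.1 = cnt p.2 then t p.1 * t p.2 else 0) := by
    rw [hLdef, Complex.re_sum]
    refine Finset.sum_congr rfl fun p _ => ?_
    by_cases hc : cnt p.1 = cnt p.2
    · rw [if_pos hc]
      have hAe : A p.1 = A p.2 := by rw [hA, hA, hc]
      have hte : t p.1 = t p.2 := by rw [ht, ht, hc]
      rw [if_pos ((h_iff p.1 p.2).mpr hc), mul_one, hAe, Complex.mul_conj]
      rw [Complex.ofReal_re]  -- maybe needs adjusting
      rw [Complex.normSq_eq_norm_sq, habsA, hte]
      ring
    · rw [if_neg hc, if_neg (fun h => hc ((h_iff _ _).mp h)), mul_zero]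
      simp
    -- Cauchy-Schwarz over count classes
  set B : Finset (Fin n → ℕ) := Finset.image cnt Finset.univ with hBdef
  set G : (Fin n → ℕ) → ℝ := fun b => ∑ d ∈ Finset.univ.filter (fun d => cnt d = b), t d with hGdef
  have hmaps : ∀ d : Fin m → Fin n, d ∈ (Finset.univ : Finset (Fin m → Fin n)) → cnt d ∈ B :=
    fun d _ => Finset.mem_image_of_mem cnt (Finset.mem_univ d)
  have hsumG : ∑ b ∈ B, G b = ∑ d : Fin m → Fin n, t d :=
    Finset.sum_fiberwise_of_maps_to hmaps t
  have hSig : (∑ k, ‖c k‖) ^ m = ∑ d : Fin m → Fin n, t d := by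
    have h1 : (∑ k, ‖c k‖) ^ m = ∏ _j : Fin m, ∑ k, ‖c k‖ := by
      rw [Finset.prod_const, Finset.card_univ, Fintype.card_fin]
    rw [h1, Finset.prod_univ_sum, Fintype.piFinset_univ]
  have e1 : L.re = ∑ d : Fin m → Fin n, t d * G (cnt d) := by
    rw [hLre, Fintype.sum_prod_type]
    refine Finset.sum_congr rfl fun d _ => ?_
    rw [hGdef]
    simp only
    rw [Finset.mul_sum, Finset.sum_filter]
    refine Finset.sum_congr rfl fun e _ => ?_
    by_cases h : cnt e = cnt d
    · rw [if_pos h, if_pos h.symm]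
    · rw [if_neg h, if_neg (fun hh => h hh.symm)]
  have e2 : ∑ d : Fin m → Fin n, t d * G (cnt d) = ∑ b ∈ B, G b ^ 2 := by
    rw [← Finset.sum_fiberwise_of_maps_to hmaps (fun d => t d * G (cnt d))]
    refine Finset.sum_congr rfl fun b hb => ?_
    rw [Finset.sum_congr rfl (fun d hd => by rw [(Finset.mem_filter.mp hd).2] :
        ∀ d ∈ Finset.univ.filter (fun d => cnt d = b), t d * G (cnt d) = t d * G b),
      ← Finset.sum_mul, sq]
  have hLre_eq : L.re = ∑ b ∈ B, G b ^ 2 := by rw [e1, e2]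
  have hLre_nn : 0 ≤ L.re := by
    rw [hLre_eq]
    exact Finset.sum_nonneg fun b _ => sq_nonneg _
  have hCS : (∑ b ∈ B, G b) ^ 2 ≤ (B.card : ℝ) * ∑ b ∈ B, G b ^ 2 := by
    exact_mod_cast sq_sum_le_card_mul_sum_sq (s := B) (f := G)
  have hBle : B.card ≤ (m+1)^n := by
    have hb_le : ∀ b ∈ B, ∀ k, b k ≤ m := by
      intro b hb k
      obtain ⟨d, _, rfl⟩ := Finset.mem_image.mp hb
      calc cnt d k ≤ (Finset.univ : Finset (Fin m)).card := Finset.card_filter_le _ _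
        _ = m := by simp
    have h1 : B.card ≤ (Finset.univ : Finset (Fin n → Fin (m+1))).card := by
      apply Finset.card_le_card_of_injOn
        (fun b k => (⟨min (b k) m, by omega⟩ : Fin (m+1)))
      · intro b _; exact Finset.mem_univ _
      · intro b hb b' hb' hEq
        funext k
        have h3 : min (b k) m = min (b' k) m := congrArg Fin.val (congrFun hEq k)
        have := hb_le b hb k
        have := hb_le b' hb' k
        omega
    calc B.card ≤ (Finset.univ : Finset (Fin n → Fin (m+1))).card := h1
      _ = (m+1)^n := by simp [Finset.card_univ]
  calc (∑ k, ‖c k‖) ^ (2*m) = ((∑ k, ‖c k‖) ^ m) ^ 2 := by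
        rw [← pow_mul, mul_comm]
    _ = (∑ b ∈ B, G b) ^ 2 := by rw [hSig, ← hsumG]
    _ ≤ (B.card : ℝ) * ∑ b ∈ B, G b ^ 2 := hCS
    _ = (B.card : ℝ) * L.re := by rw [hLre_eq]
    _ ≤ ((m+1:ℕ):ℝ)^n * L.re := by
        apply mul_le_mul_of_nonneg_right _ hLre_nn
        exact_mod_cast hBle
    _ ≤ ((m+1:ℕ):ℝ)^n * S^(2*m) := by
        apply mul_le_mul_of_nonneg_left hLre_le
        positivity

theorem stmt_2 (n : ℕ) (lam : Fin n → ℝ) (c : Fin n → ℂ)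
    (hindep : ∀ r : Fin n → ℚ, (∑ k, (r k : ℝ) * lam k) = 0 → ∀ k, r k = 0)
    (f : ℝ → ℂ)
    (hf : ∀ x : ℝ, f x = ∑ k, c k * Complex.exp (Complex.I * (lam k : ℂ) * (x : ℂ))) :
    (⨆ x : ℝ, ‖f x‖) = ∑ k, ‖c k‖ := by
  classical
  set Sig : ℝ := ∑ k, ‖c k‖ with hSig
  have hS : ∀ x : ℝ, ‖f x‖ ≤ Sig := by
    intro x
    rw [hf x]
    refine (norm_sum_le _ _).trans (le_of_eq (Finset.sum_congr rfl fun k _ => ?_))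
    rw [norm_mul, Complex.norm_exp]
    simp [Complex.mul_re, Complex.I_re, Complex.I_im]
  set S : ℝ := ⨆ x : ℝ, ‖f x‖ with hSdef
  have hbdd : BddAbove (Set.range fun x => ‖f x‖) :=
    ⟨Sig, by rintro y ⟨x, rfl⟩; exact hS x⟩
  have hub : ∀ x, ‖f x‖ ≤ S := fun x => le_ciSup hbdd x
  have hSle : S ≤ Sig := ciSup_le hS
  have hS0 : 0 ≤ S := le_trans (norm_nonneg _) (hub 0)
  have key : ∀ m : ℕ, Sig^(2*m) ≤ ((m+1:ℕ):ℝ)^n * S^(2*m) := fun m =>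
    key_ineq n lam c hindep S (fun x => by rw [← hf x]; exact hub x) m
  refine le_antisymm hSle (not_lt.mp fun hlt => ?_)
  have hSigpos : 0 < Sig := lt_of_le_of_lt hS0 hlt
  obtain ⟨q, hqdef⟩ : ∃ q : ℝ, q = S / Sig := ⟨_, rfl⟩
  have hq0 : 0 ≤ q := hqdef ▸ div_nonneg hS0 hSigpos.le
  have hq1 : q < 1 := by rw [hqdef]; exact (div_lt_one hSigpos).mpr hlt
  obtain ⟨r, hrdef⟩ : ∃ r : ℝ, r = q^2 := ⟨_, rfl⟩
  have hr0 : 0 ≤ r := hrdef ▸ sq_nonneg _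
  have hr1 : r < 1 := by
    rw [hrdef]
    exact pow_lt_one₀ hq0 hq1 two_ne_zero
  have hqm : ∀ m : ℕ, (1:ℝ) ≤ ((m+1:ℕ):ℝ)^n * r^m := by
    intro m
    have h2 : (0:ℝ) < Sig^(2*m) := pow_pos hSigpos _
    rw [hrdef, hqdef, ← pow_mul, div_pow, ← mul_div_assoc, le_div_iff₀ h2, one_mul]
    exact key m
  rcases eq_or_lt_of_le hr0 with hr | hr
  · -- r = 0 means S = 0
    have hq : q = 0 := by
      have h7 : q^2 = 0 := by rw [← hrdef, ← hr]
      exact pow_eq_zero_iff two_ne_zero |>.mp h7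
    have hs0 : S = 0 := by
      rw [hqdef, div_eq_zero_iff] at hq
      rcases hq with h | h
      · exact h
      · exact absurd h hSigpos.ne'
    have h1 := key 1
    rw [hs0] at h1
    simp at h1
    nlinarith [hSigpos]
  · have hsum : Summable (fun i : ℕ => (i:ℝ)^n * r^i) := by
      apply summable_pow_mul_geometric_of_norm_lt_one
      rw [Real.norm_eq_abs, abs_of_nonneg hr0]
      exact hr1
    have htend := hsum.tendsto_atTop_zero
    have h4 : Tendsto (fun m : ℕ => (((m+1:ℕ)):ℝ)^n * r^(m+1)) atTop (𝓝 0) := by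
      have := htend.comp (tendsto_add_atTop_nat 1)
      simpa [Function.comp_def] using this
    have h5 : Tendsto (fun m : ℕ => (((m+1:ℕ)):ℝ)^n * r^m) atTop (𝓝 0) := by
      have h6 := h4.const_mul r⁻¹
      rw [mul_zero] at h6
      refine h6.congr fun m => ?_
      rw [pow_succ]
      field_simp
    have hev : ∀ᶠ m : ℕ in atTop, ((m+1:ℕ):ℝ)^n * r^m < 1 :=
      h5.eventually (gt_mem_nhds one_pos)
    obtain ⟨m, hm⟩ := hev.exists
    linarith [hqm m]
end

section
/- Let the real numbers λ_1,…,λ_n be linearly independent over the field of rational numbers, let c_1,…,c_n be complex numbers, let f(x)=∑_{k=1}^n c_k e^{iλ_k x}, and let g(x)=∑_{k=1}^n |c_k| e^{iλ_k x}. Then sup_{x∈ℝ} |f(x)| = sup_{x∈ℝ} |g(x)| and inf_{x∈ℝ} |f(x)| = inf_{x∈ℝ} |g(x)|; that is, the quantities r = inf|f| and R = sup|f| depend only on the moduli |c_1|,…,|c_n|. -/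
open Complex Finset

noncomputable def Complex.abs : AbsoluteValue ℂ ℝ where
  toFun := fun z => ‖z‖
  map_mul' := norm_mul
  nonneg' := norm_nonneg
  eq_zero' _ := norm_eq_zero
  add_le' := norm_add_le

lemma Complex.abs_eq_norm' (z : ℂ) : Complex.abs z = ‖z‖ := rfl

@[simp] lemma Complex.abs_ofReal (r : ℝ) : Complex.abs (r : ℂ) = |r| := by
  rw [Complex.abs_eq_norm', Complex.norm_real, Real.norm_eq_abs]

@[simp] lemma Complex.abs_I : Complex.abs I = 1 := by
  rw [Complex.abs_eq_norm', Complex.norm_I]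

lemma Complex.abs_exp_ofReal_mul_I (x : ℝ) : Complex.abs (cexp (x * I)) = 1 :=
  Complex.norm_exp_ofReal_mul_I x

@[simp] lemma Complex.abs_conj (z : ℂ) : Complex.abs ((starRingEnd ℂ) z) = Complex.abs z :=
  Complex.norm_conj z

lemma Complex.abs_apply (z : ℂ) : Complex.abs z = Real.sqrt (Complex.normSq z) :=
  Complex.norm_def z

lemma Complex.continuous_abs : Continuous Complex.abs := continuous_norm

lemma Complex.normSq_eq_abs (z : ℂ) : Complex.normSq z = Complex.abs z ^ 2 :=
  Complex.normSq_eq_norm_sq z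

lemma Complex.abs_mul_exp_arg_mul_I (x : ℂ) : ((Complex.abs x : ℝ) : ℂ) * cexp ((arg x : ℂ) * I) = x :=
  Complex.norm_mul_exp_arg_mul_I x

lemma Complex.re_le_abs (z : ℂ) : z.re ≤ Complex.abs z := Complex.re_le_norm z

variable {m N : ℕ}

def cnt (p : Fin m → Fin N) (i : Fin N) : ℕ := (univ.filter (fun t => p t = i)).card

lemma sum_comp_eq (p : Fin m → Fin N) (h : Fin N → ℝ) :
    (∑ t, h (p t)) = ∑ i, (cnt p i : ℝ) * h i := by
  classical
  rw [← Finset.sum_fiberwise univ (fun t => p t) (fun t => h (p t))]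
  refine Finset.sum_congr rfl fun i _ => ?_
  rw [Finset.sum_congr rfl (fun t ht => ?_), Finset.sum_const, nsmul_eq_mul]
  · rfl
  · rw [(Finset.mem_filter.mp ht).2]

def Dcard (m N : ℕ) : ℕ :=
  (univ.filter fun pq : (Fin m → Fin N) × (Fin m → Fin N) => cnt pq.1 = cnt pq.2).card

lemma cnt_le (p : Fin m → Fin N) (i : Fin N) : cnt p i ≤ m := by
  classical
  calc cnt p i ≤ (univ : Finset (Fin m)).card := card_filter_le _ _
  _ = m := by simp

lemma sum_cnt (p : Fin m → Fin N) : (∑ i, cnt p i) = m := by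
  classical
  unfold cnt
  rw [← Finset.card_eq_sum_card_fiberwise (fun t _ => mem_univ (p t))]
  · simp
  
/-- content as a Fintype-valued function -/
def content (p : Fin m → Fin N) : Fin N → Fin (m + 1) :=
  fun i => ⟨cnt p i, Nat.lt_succ_of_le (cnt_le p i)⟩

lemma content_eq_iff (p q : Fin m → Fin N) : content p = content q ↔ cnt p = cnt q := by
  constructor
  · intro h; funext i; exact congrArg Fin.val (congrFun h i)
  · intro h; funext i; exact Fin.ext (congrArg (fun s => s i) h)

lemma Dcard_bound (m N : ℕ) : ((N : ℝ)) ^ (2 * m) ≤ (Dcard m N : ℝ) * (m + 1) ^ N := by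
  classical
  set fib : (Fin N → Fin (m + 1)) → ℕ := fun a => (univ.filter fun p : Fin m → Fin N => content p = a).card with hfib
  have h1 : (∑ a, fib a) = N ^ m := by
    rw [← Finset.card_eq_sum_card_fiberwise (fun p _ => mem_univ (content p))]
    simp [Fintype.card_fun]
  have h2 : Dcard m N = ∑ a, (fib a) ^ 2 := by
    unfold Dcard
    rw [Finset.card_eq_sum_card_fiberwise
      (f := fun pq : (Fin m → Fin N) × (Fin m → Fin N) => content pq.1)
      (fun pq _ => mem_univ _)]
    refine Finset.sum_congr rfl fun a _ => ?_
    have : (univ.filter fun pq : (Fin m → Fin N) × (Fin m → Fin N) => cnt pq.1 = cnt pq.2).filter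
        (fun pq => content pq.1 = a)
        = (univ.filter fun p : Fin m → Fin N => content p = a) ×ˢ
          (univ.filter fun p : Fin m → Fin N => content p = a) := by
      ext pq
      simp only [mem_filter, mem_univ, true_and, Finset.mem_product, ← content_eq_iff]
      constructor
      · rintro ⟨h, rfl⟩; exact ⟨rfl, h.symm⟩
      · rintro ⟨h1', h2'⟩; exact ⟨h1'.trans h2'.symm, h1'⟩
    rw [this, Finset.card_product, sq]
  have cheb : ((∑ a, (fib a : ℝ))) ^ 2 ≤ (Fintype.card (Fin N → Fin (m + 1)) : ℝ) * ∑ a, (fib a : ℝ) ^ 2 := by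
    simpa using sq_sum_le_card_mul_sum_sq (s := (univ : Finset (Fin N → Fin (m+1)))) (f := fun a => (fib a : ℝ))
  have : ((N : ℝ)) ^ (2 * m) = ((∑ a, (fib a : ℝ))) ^ 2 := by
    have hsum : (∑ a, (fib a : ℝ)) = (N : ℝ) ^ m := by exact_mod_cast congrArg (Nat.cast (R := ℝ)) h1
    rw [hsum, ← pow_mul, mul_comm m 2]
  rw [this]
  refine cheb.trans ?_
  rw [Fintype.card_fun]
  have : ((Dcard m N : ℝ)) = ∑ a, (fib a : ℝ) ^ 2 := by push_cast [h2]; ring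
  rw [this]
  simp [mul_comm]

lemma my_exp_mul_exp (a b a' b' x : ℝ) :
    cexp (I * ((a:ℂ) * x + b)) * cexp (I * ((a':ℂ) * x + b'))
      = cexp (I * (((a + a' : ℝ):ℂ) * x + ((b + b' : ℝ):ℂ))) := by
  rw [← Complex.exp_add]; congr 1; push_cast; ring

lemma my_conj_exp (a b x : ℝ) :
    (starRingEnd ℂ) (cexp (I * ((a:ℂ) * x + b)))
      = cexp (I * (((-a : ℝ):ℂ) * x + ((-b : ℝ):ℂ))) := by
  rw [← Complex.exp_conj]; congr 1
  simp only [map_mul, map_add, Complex.conj_I, Complex.conj_ofReal]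
  push_cast; ring

lemma my_pow_expand (v w : Fin N → ℝ) (x : ℝ) (m : ℕ) :
    (∑ i, cexp (I * ((v i : ℂ) * x + (w i : ℂ)))) ^ m
      = ∑ p : Fin m → Fin N,
          cexp (I * (((∑ t, v (p t) : ℝ) : ℂ) * x + ((∑ t, w (p t) : ℝ) : ℂ))) := by
  rw [Fintype.sum_pow]
  refine Finset.sum_congr rfl fun p _ => ?_
  rw [← Complex.exp_sum]
  congr 1
  push_cast
  simp only [mul_add, Finset.sum_add_distrib, Finset.mul_sum, Finset.sum_mul, mul_assoc]

lemma cont_my_exp (a b : ℝ) : Continuous fun x : ℝ => cexp (I * ((a:ℂ) * x + b)) := by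
  have h : Continuous fun x : ℝ => I * ((a:ℂ) * x + b) :=
    continuous_const.mul ((continuous_const.mul Complex.continuous_ofReal).add continuous_const)
  exact Complex.continuous_exp.comp h

lemma my_hasDerivAt (μ c : ℝ) (x : ℝ) :
    HasDerivAt (fun x : ℝ => Complex.exp (I * ((μ:ℂ) * x + c))) (Complex.exp (I * ((μ:ℂ) * x + c)) * (I * μ)) x := by
  have h0 : HasDerivAt (fun x : ℝ => (x : ℂ)) 1 x := by
    simpa using (hasDerivAt_id x).ofReal_comp
  have h1 : HasDerivAt (fun x : ℝ => I * ((μ:ℂ) * x + c)) (I * μ) x := by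
    simpa [mul_one] using ((h0.const_mul (μ:ℂ)).add_const (c:ℂ)).const_mul I
  exact h1.cexp

lemma my_integral (μ c : ℝ) (T : ℝ) (hμ : μ ≠ 0) :
    ∫ x in (0:ℝ)..T, Complex.exp (I * ((μ:ℂ) * x + c))
      = (Complex.exp (I * ((μ:ℂ) * T + c)) - Complex.exp (I * (c:ℂ))) / (I * μ) := by
  have hIμ : (I * (μ:ℂ)) ≠ 0 := by
    simp [Complex.I_ne_zero, Complex.ofReal_eq_zero, hμ]
  have key : ∀ x : ℝ, HasDerivAt (fun x : ℝ => Complex.exp (I * ((μ:ℂ) * x + c)) / (I * μ))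
      (Complex.exp (I * ((μ:ℂ) * x + c))) x := by
    intro x
    have := (my_hasDerivAt μ c x).div_const (I * μ)
    simpa [mul_div_assoc, div_self hIμ] using this
  have hcont : Continuous (fun x : ℝ => Complex.exp (I * ((μ:ℂ) * x + c))) := cont_my_exp μ c
  have := intervalIntegral.integral_eq_sub_of_hasDerivAt
    (f := fun x : ℝ => Complex.exp (I * ((μ:ℂ) * x + c)) / (I * μ))
    (fun x _ => key x) (hcont.intervalIntegrable 0 T)
  rw [this]
  simp [div_sub_div_same]

lemma abs_my_exp (μ c : ℝ) (x : ℝ) : Complex.abs (Complex.exp (I * ((μ:ℂ) * x + c))) = 1 := by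
  have : I * ((μ:ℂ) * x + c) = ((μ * x + c : ℝ) : ℂ) * I := by push_cast; ring
  rw [this, Complex.abs_exp_ofReal_mul_I]

lemma my_integral_bound (μ c : ℝ) (T : ℝ) (hμ : μ ≠ 0) :
    Complex.abs (∫ x in (0:ℝ)..T, Complex.exp (I * ((μ:ℂ) * x + c))) ≤ 2 / |μ| := by
  rw [my_integral μ c T hμ, map_div₀]
  have h1 : Complex.abs (I * (μ:ℂ)) = |μ| := by simp
  rw [h1]
  gcongr
  calc Complex.abs (cexp (I * ((μ:ℂ) * T + c)) - cexp (I * (c:ℂ)))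
      ≤ Complex.abs (cexp (I * ((μ:ℂ) * T + c))) + Complex.abs (cexp (I * (c:ℂ))) :=
        AbsoluteValue.sub_le_add _ _ _
    _ ≤ 2 := by
        have h2 := abs_my_exp μ c T
        have h3 : Complex.abs (cexp (I * (c:ℂ))) = 1 := by
          simpa using abs_my_exp 0 c 0
        rw [h2, h3]; norm_num

/-- Main integral estimate. -/
lemma engine_integral (μ β : Fin N → ℝ)
    (hsep : ∀ (m : ℕ) (p q : Fin m → Fin N), (∑ t, μ (p t)) = (∑ t, μ (q t)) → cnt p = cnt q)
    (m : ℕ) :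
    ∃ C : ℝ, 0 ≤ C ∧ ∀ T : ℝ,
      |(∫ x in (0:ℝ)..T, (Complex.abs (∑ i, cexp (I * ((μ i : ℂ) * x + (β i : ℂ))))) ^ (2*m))
        - (Dcard m N : ℝ) * T| ≤ C := by
  classical
  set ψ : ℝ → ℂ := fun x => ∑ i, cexp (I * ((μ i : ℂ) * x + (β i : ℂ))) with hψ
  set S : (Fin m → Fin N) → ℝ := fun p => ∑ t, μ (p t) with hS
  set B : (Fin m → Fin N) → ℝ := fun p => ∑ t, β (p t) with hB
  set P := (Fin m → Fin N) × (Fin m → Fin N)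
  -- expansion of |ψ|^{2m} as complex sum
  have expand : ∀ x : ℝ, (((Complex.abs (ψ x)) ^ (2*m) : ℝ) : ℂ)
      = ∑ pq : P, cexp (I * (((S pq.1 - S pq.2 : ℝ) : ℂ) * x + ((B pq.1 - B pq.2 : ℝ) : ℂ))) := by
    intro x
    have hconj : (starRingEnd ℂ) (ψ x) = ∑ i, cexp (I * (((-μ i : ℝ) : ℂ) * x + ((-β i : ℝ) : ℂ))) := by
      rw [hψ, map_sum]
      exact Finset.sum_congr rfl fun i _ => my_conj_exp _ _ _
    have h1 : (((Complex.abs (ψ x)) ^ (2*m) : ℝ) : ℂ) = (ψ x) ^ m * ((starRingEnd ℂ) (ψ x)) ^ m := by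
      rw [← mul_pow, Complex.mul_conj, ← Complex.ofReal_pow, Complex.ofReal_inj,
        Complex.normSq_eq_abs, ← pow_mul, mul_comm 2 m]
    rw [h1, hconj, my_pow_expand μ β x m, my_pow_expand (fun i => -μ i) (fun i => -β i) x m,
      Finset.sum_mul_sum, ← Finset.sum_product']
    refine Finset.sum_congr rfl fun pq _ => ?_
    rw [my_exp_mul_exp]
    congr 1
    simp only [hS, hB]
    push_cast
    simp [Finset.sum_neg_distrib, sub_eq_add_neg]
  set term : P → ℝ → ℂ := fun pq x =>
    cexp (I * (((S pq.1 - S pq.2 : ℝ) : ℂ) * x + ((B pq.1 - B pq.2 : ℝ) : ℂ))) with hterm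
  have hcont : ∀ pq : P, Continuous (term pq) := by
    intro pq; exact cont_my_exp _ _
  refine ⟨∑ pq ∈ univ.filter (fun pq : P => ¬ cnt pq.1 = cnt pq.2), 2 / |S pq.1 - S pq.2|,
    Finset.sum_nonneg (fun pq _ => by positivity), fun T => ?_⟩
  have hI : (((∫ x in (0:ℝ)..T, (Complex.abs (ψ x)) ^ (2*m) : ℝ)) : ℂ)
      = ∑ pq : P, ∫ x in (0:ℝ)..T, term pq x := by
    rw [← intervalIntegral.integral_ofReal]
    rw [intervalIntegral.integral_congr (g := fun x => ∑ pq : P, term pq x)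
      (fun x _ => expand x)]
    exact intervalIntegral.integral_finset_sum
      (fun pq _ => (hcont pq).intervalIntegrable 0 T)
  have hsplit := Finset.sum_filter_add_sum_filter_not (univ : Finset P)
    (fun pq => cnt pq.1 = cnt pq.2) (fun pq => ∫ x in (0:ℝ)..T, term pq x)
  have hdiag : ∑ pq ∈ univ.filter (fun pq : P => cnt pq.1 = cnt pq.2),
      (∫ x in (0:ℝ)..T, term pq x) = (Dcard m N : ℝ) * T := by
    have hone : ∀ pq ∈ univ.filter (fun pq : P => cnt pq.1 = cnt pq.2),
        (∫ x in (0:ℝ)..T, term pq x) = (T : ℂ) := by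
      intro pq hpq
      have hc : cnt pq.1 = cnt pq.2 := (Finset.mem_filter.mp hpq).2
      have hs : S pq.1 = S pq.2 := by
        rw [hS]; simp only
        rw [sum_comp_eq, sum_comp_eq, hc]
      have hb : B pq.1 = B pq.2 := by
        rw [hB]; simp only
        rw [sum_comp_eq, sum_comp_eq, hc]
      have hterm1 : term pq = fun _ : ℝ => 1 := by
        funext x
        rw [hterm]; simp only [hs, hb, sub_self]
        push_cast
        simp
      rw [hterm1]
      simp
    rw [Finset.sum_congr rfl hone, Finset.sum_const, Dcard, nsmul_eq_mul]
    push_cast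
    ring
  have hoff : Complex.abs (∑ pq ∈ univ.filter (fun pq : P => ¬ cnt pq.1 = cnt pq.2),
      (∫ x in (0:ℝ)..T, term pq x))
      ≤ ∑ pq ∈ univ.filter (fun pq : P => ¬ cnt pq.1 = cnt pq.2), 2 / |S pq.1 - S pq.2| := by
    refine (AbsoluteValue.sum_le _ _ _).trans (Finset.sum_le_sum fun pq hpq => ?_)
    have hne : S pq.1 - S pq.2 ≠ 0 := by
      intro h0
      exact (Finset.mem_filter.mp hpq).2 (hsep m pq.1 pq.2 (by linarith [sub_eq_zero.mp h0]))
    exact my_integral_bound _ _ T hne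
  calc |(∫ x in (0:ℝ)..T, (Complex.abs (ψ x)) ^ (2*m)) - (Dcard m N : ℝ) * T|
      = Complex.abs ((((∫ x in (0:ℝ)..T, (Complex.abs (ψ x)) ^ (2*m) : ℝ)) : ℂ)
          - ((Dcard m N : ℝ) * T : ℝ)) := by
        rw [← Complex.ofReal_sub, Complex.abs_ofReal]
    _ = Complex.abs (∑ pq ∈ univ.filter (fun pq : P => ¬ cnt pq.1 = cnt pq.2),
          (∫ x in (0:ℝ)..T, term pq x)) := by
        rw [hI, ← hsplit, hdiag]
        congr 1
        push_cast
        ring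
    _ ≤ _ := hoff

lemma Dcard_bound' (m : ℕ) (hD : ((N:ℝ))^(2*m) ≤ (Dcard m N : ℝ) * ((m:ℝ)+1)^N)
    {a : ℝ} (ha : a^(2*m) * ((m:ℝ)+1)^N < (N:ℝ)^(2*m)) : a^(2*m) < (Dcard m N : ℝ) := by
  have hpos : (0:ℝ) < ((m:ℝ)+1)^N := by positivity
  nlinarith

lemma exists_good_m (hN : 0 < N) {a : ℝ} (ha : 0 ≤ a) (haN : a < N) :
    ∃ m : ℕ, a^(2*m) * ((m:ℝ)+1)^N < (N:ℝ)^(2*m) := by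
  rcases eq_or_lt_of_le ha with h0 | h0
  · refine ⟨1, ?_⟩
    rw [← h0]
    have : (0:ℝ) < (N:ℝ)^(2*1) := by positivity
    simpa using this
  · set ρ : ℝ := ((N:ℝ)/a)^2 with hρdef
    have hρ : 1 < ρ := by
      have : 1 < (N:ℝ)/a := (one_lt_div h0).mpr haN
      nlinarith
    have htend : Filter.Tendsto (fun m : ℕ => ((m:ℝ))^N / ρ^m) Filter.atTop (nhds 0) :=
      tendsto_pow_const_div_const_pow_of_one_lt N hρ
    have htend2 : Filter.Tendsto (fun m : ℕ => (((m+1:ℕ)):ℝ)^N / ρ^(m+1)) Filter.atTop (nhds 0) :=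
      htend.comp (Filter.tendsto_add_atTop_nat 1)
    have hev : ∀ᶠ m in Filter.atTop, (((m+1:ℕ)):ℝ)^N / ρ^(m+1) < 1/ρ :=
      htend2.eventually (gt_mem_nhds (by positivity))
    obtain ⟨m, hm⟩ := hev.exists
    refine ⟨m, ?_⟩
    have hρpos : (0:ℝ) < ρ := by positivity
    have h1 : (((m:ℝ))+1)^N < ρ^m := by
      have hpow : (0:ℝ) < ρ^(m+1) := by positivity
      rw [div_lt_div_iff₀ hpow hρpos] at hm
      push_cast at hm
      rw [one_mul, pow_succ] at hm
      exact (mul_lt_mul_iff_left₀ hρpos).mp hm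
    have hρm : a^(2*m) * ρ^m = (N:ℝ)^(2*m) := by
      rw [hρdef, ← pow_mul, mul_comm 2 m, ← mul_pow, pow_mul]
      rw [mul_div_cancel₀ _ (ne_of_gt h0)]
      rw [← pow_mul, mul_comm m 2]
    calc a^(2*m) * ((m:ℝ)+1)^N < a^(2*m) * ρ^m := by
          have : (0:ℝ) < a^(2*m) := by positivity
          exact (mul_lt_mul_iff_right₀ this).mpr h1
      _ = (N:ℝ)^(2*m) := hρm

lemma engine (μ β : Fin N → ℝ) (hN : 0 < N)
    (hDb : ∀ m : ℕ, ((N:ℝ))^(2*m) ≤ (Dcard m N : ℝ) * ((m:ℝ)+1)^N)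
    (hsep : ∀ (m : ℕ) (p q : Fin m → Fin N), (∑ t, μ (p t)) = (∑ t, μ (q t)) → cnt p = cnt q)
    {δ : ℝ} (hδ : 0 < δ) (hδ1 : δ ≤ 1) :
    ∃ x : ℝ, (N:ℝ) - δ < Complex.abs (∑ i, cexp (I * ((μ i : ℂ) * x + (β i : ℂ)))) := by
  set ψ : ℝ → ℂ := fun x => ∑ i, cexp (I * ((μ i : ℂ) * x + (β i : ℂ))) with hψ
  by_contra hcon
  push_neg at hcon
  set a : ℝ := (N:ℝ) - δ with hadef
  have hN1 : (1:ℝ) ≤ N := by exact_mod_cast hN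
  have ha : 0 ≤ a := by rw [hadef]; linarith
  have haN : a < N := by rw [hadef]; linarith
  obtain ⟨m, hm⟩ := exists_good_m hN ha haN
  have haD : a^(2*m) < (Dcard m N : ℝ) := Dcard_bound' m (hDb m) hm
  obtain ⟨C, hC0, hC⟩ := engine_integral μ β hsep m
  set Dr : ℝ := (Dcard m N : ℝ) with hDr
  set Bv : ℝ := a^(2*m) with hBv
  set T : ℝ := max 1 ((C + 1)/(Dr - Bv)) with hT
  have hT1 : (1:ℝ) ≤ T := le_max_left _ _
  have hT0 : (0:ℝ) < T := by linarith
  have hDB : 0 < Dr - Bv := by rw [hDr, hBv]; linarith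
  have hTC : C < (Dr - Bv) * T := by
    have h2 : (C + 1)/(Dr - Bv) ≤ T := le_max_right _ _
    have := (div_le_iff₀ hDB).mp h2
    nlinarith
  have hcψ : Continuous ψ := by
    rw [hψ]
    exact continuous_finset_sum _ (fun i _ => cont_my_exp _ _)
  have hint1 : IntervalIntegrable (fun x => (Complex.abs (ψ x))^(2*m)) MeasureTheory.volume 0 T :=
    ((Complex.continuous_abs.comp hcψ).pow (2*m)).intervalIntegrable 0 T
  have hupper : (∫ x in (0:ℝ)..T, (Complex.abs (ψ x))^(2*m)) ≤ Bv * T := by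
    have := intervalIntegral.integral_mono_on (le_of_lt hT0) hint1
      (intervalIntegrable_const (c := Bv)) (fun x _ => ?_)
    · calc (∫ x in (0:ℝ)..T, (Complex.abs (ψ x))^(2*m)) ≤ ∫ _ in (0:ℝ)..T, Bv := this
        _ = Bv * T := by rw [intervalIntegral.integral_const]; simp [mul_comm]
    · rw [hBv]
      exact pow_le_pow_left₀ (Complex.abs.nonneg _) (hcon x) _
  have hlower : Dr * T - C ≤ (∫ x in (0:ℝ)..T, (Complex.abs (ψ x))^(2*m)) := by
    have := hC T
    have := abs_le.mp this
    linarith [this.1]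
  nlinarith

lemma my_kronecker (n : ℕ) (lam : Fin n → ℝ)
    (hindep : ∀ r : Fin n → ℚ, (∑ k, (r k : ℝ) * lam k) = 0 → ∀ k, r k = 0)
    (hDb : ∀ m : ℕ, (((n+1:ℕ):ℝ))^(2*m) ≤ (Dcard m (n+1) : ℝ) * ((m:ℝ)+1)^(n+1))
    (θ : Fin n → ℝ) {ε : ℝ} (hε : 0 < ε) :
    ∃ x : ℝ, ∀ k, Complex.abs (cexp (I * (lam k : ℂ) * (x:ℂ)) - cexp (I * (θ k : ℂ))) < ε := by
  classical
  set μ : Fin (n+1) → ℝ := Fin.cons 0 lam with hμ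
  set β : Fin (n+1) → ℝ := Fin.cons 0 (fun k => -θ k) with hβ
  have hsep : ∀ (m : ℕ) (p q : Fin m → Fin (n+1)),
      (∑ t, μ (p t)) = (∑ t, μ (q t)) → cnt p = cnt q := by
    intro m p q hsum
    have hsum' : ∑ i, (cnt p i : ℝ) * μ i = ∑ i, (cnt q i : ℝ) * μ i := by
      rw [← sum_comp_eq, ← sum_comp_eq, hsum]
    rw [Fin.sum_univ_succ, Fin.sum_univ_succ] at hsum'
    simp only [hμ, Fin.cons_zero, Fin.cons_succ, mul_zero] at hsum'
    have hsucc : ∀ k : Fin n, cnt p k.succ = cnt q k.succ := by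
      intro k
      have hr := hindep (fun k => (cnt p k.succ : ℚ) - (cnt q k.succ : ℚ)) ?_ k
      · have := sub_eq_zero.mp hr
        exact_mod_cast this
      · push_cast
        simp only [sub_mul, Finset.sum_sub_distrib]
        rw [sub_eq_zero]
        linarith [hsum']
    have hzero : cnt p 0 = cnt q 0 := by
      have hp := sum_cnt p
      have hq := sum_cnt q
      rw [Fin.sum_univ_succ] at hp hq
      have : ∑ k : Fin n, cnt p k.succ = ∑ k : Fin n, cnt q k.succ :=
        Finset.sum_congr rfl fun k _ => hsucc k
      omega
    funext i
    refine Fin.cases hzero hsucc i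
  set δ : ℝ := min 1 (ε^2/8) with hδdef
  have hδ0 : 0 < δ := lt_min one_pos (by positivity)
  have hδ1 : δ ≤ 1 := min_le_left _ _
  obtain ⟨x, hx⟩ := engine μ β (Nat.succ_pos n) hDb hsep hδ0 hδ1
  refine ⟨x, fun k => ?_⟩
  set u : Fin (n+1) → ℂ := fun i => cexp (I * ((μ i : ℂ) * x + (β i : ℂ))) with hu
  set z : ℂ := ∑ i, u i with hz
  have habsu : ∀ i, Complex.abs (u i) = 1 := fun i => abs_my_exp _ _ _
  have hzgt : ((n+1:ℕ):ℝ) - δ < Complex.abs z := hx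
  have hzpos : 0 < Complex.abs z := by
    have : ((n:ℝ)) ≤ ((n+1:ℕ):ℝ) - δ := by push_cast; linarith
    have h0 : (0:ℝ) ≤ (n:ℝ) := Nat.cast_nonneg n
    linarith
  set w : ℂ := z / (Complex.abs z : ℂ) with hw
  have habsz_ne : ((Complex.abs z : ℝ) : ℂ) ≠ 0 := by
    simp [Complex.ofReal_ne_zero, ne_of_gt hzpos]
  have hwz : (starRingEnd ℂ) w * z = ((Complex.abs z : ℝ) : ℂ) := by
    rw [hw, map_div₀, Complex.conj_ofReal, div_mul_eq_mul_div, mul_comm,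
      Complex.mul_conj, Complex.normSq_eq_abs]
    push_cast
    field_simp
  have habsw : Complex.abs w = 1 := by
    rw [hw, map_div₀, Complex.abs_ofReal, abs_of_pos hzpos, div_self (ne_of_gt hzpos)]
  have hresum : ∑ i, ((starRingEnd ℂ) w * u i).re = Complex.abs z := by
    rw [← Complex.re_sum, ← Finset.mul_sum, ← hz, hwz, Complex.ofReal_re]
  have hone : ∀ i, ((starRingEnd ℂ) w * u i).re ≤ 1 := by
    intro i
    refine (Complex.re_le_abs _).trans ?_
    rw [map_mul, Complex.abs_conj, habsw, habsu, one_mul]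
  have hrei : ∀ i, 1 - δ < ((starRingEnd ℂ) w * u i).re := by
    intro i
    have herase : ∑ j ∈ univ.erase i, ((starRingEnd ℂ) w * u j).re ≤ (n:ℝ) := by
      have := Finset.sum_le_card_nsmul (univ.erase i)
        (fun j => ((starRingEnd ℂ) w * u j).re) 1 (fun j _ => hone j)
      rwa [Finset.card_erase_of_mem (mem_univ i), Finset.card_univ, Fintype.card_fin,
        Nat.add_sub_cancel, nsmul_eq_mul, mul_one] at this
    have hsum := Finset.sum_erase_add univ (fun j => ((starRingEnd ℂ) w * u j).re) (mem_univ i)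
    rw [hresum] at hsum
    have : ((n+1:ℕ):ℝ) = (n:ℝ) + 1 := by push_cast; ring
    rw [this] at hzgt
    linarith
  have hdist : ∀ i, Complex.abs (u i - w) < Real.sqrt (2*δ) := by
    intro i
    have hnsq : Complex.normSq (u i - w) < 2*δ := by
      rw [Complex.normSq_sub]
      have h1 : Complex.normSq (u i) = 1 := by
        rw [Complex.normSq_eq_abs, habsu, one_pow]
      have h2 : Complex.normSq w = 1 := by
        rw [Complex.normSq_eq_abs, habsw, one_pow]
      have h3 : (u i * (starRingEnd ℂ) w).re = ((starRingEnd ℂ) w * u i).re := by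
        rw [mul_comm]
      rw [h1, h2, h3]
      have := hrei i
      linarith
    rw [Complex.abs_apply]
    exact Real.sqrt_lt_sqrt (Complex.normSq_nonneg _) hnsq
  have hsqrt : Real.sqrt (2*δ) ≤ ε/2 := by
    have h1 : 2*δ ≤ ε^2/4 := by
      have := min_le_right (1:ℝ) (ε^2/8)
      have hδle : δ ≤ ε^2/8 := this
      linarith
    calc Real.sqrt (2*δ) ≤ Real.sqrt (ε^2/4) := Real.sqrt_le_sqrt h1
      _ = ε/2 := by
          rw [show ε^2/4 = (ε/2)^2 by ring, Real.sqrt_sq (by positivity)]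
  have hu0 : u 0 = 1 := by
    rw [hu]
    simp [hμ, hβ]
  have hkey : Complex.abs (u k.succ - 1) < ε := by
    calc Complex.abs (u k.succ - 1)
        ≤ Complex.abs (u k.succ - w) + Complex.abs (w - 1) := by
          have := Complex.abs.sub_le (u k.succ) w 1
          simpa using this
      _ < Real.sqrt (2*δ) + Real.sqrt (2*δ) := by
          have h2 : Complex.abs (w - 1) < Real.sqrt (2*δ) := by
            rw [← hu0, ← AbsoluteValue.map_sub Complex.abs]
            exact hdist 0
          exact add_lt_add (hdist k.succ) h2
      _ ≤ ε/2 + ε/2 := add_le_add hsqrt hsqrt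
      _ = ε := by ring
  have hfact : cexp (I * (lam k : ℂ) * (x:ℂ)) - cexp (I * (θ k : ℂ))
      = (u k.succ - 1) * cexp (I * (θ k : ℂ)) := by
    rw [hu]
    simp only [hμ, hβ, Fin.cons_succ]
    rw [sub_mul, one_mul, ← Complex.exp_add]
    congr 2
    push_cast
    ring
  rw [hfact, map_mul]
  have : Complex.abs (cexp (I * (θ k : ℂ))) = 1 := by
    have := abs_my_exp 0 (θ k) 0
    simpa using this
  rw [this, mul_one]
  exact hkey

theorem stmt_3 (n : ℕ) (lam : Fin n → ℝ) (c : Fin n → ℂ)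
    (hindep : ∀ r : Fin n → ℚ, (∑ k, (r k : ℝ) * lam k) = 0 → ∀ k, r k = 0)
    (f g : ℝ → ℂ)
    (hf : ∀ x : ℝ, f x = ∑ k, c k * Complex.exp (Complex.I * (lam k : ℂ) * (x : ℂ)))
    (hg : ∀ x : ℝ, g x = ∑ k, (‖c k‖ : ℂ) * Complex.exp (Complex.I * (lam k : ℂ) * (x : ℂ))) :
    (⨆ x : ℝ, ‖f x‖) = (⨆ x : ℝ, ‖g x‖) ∧
    (⨅ x : ℝ, ‖f x‖) = (⨅ x : ℝ, ‖g x‖) := by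
  classical
  simp only [← Complex.abs_eq_norm'] at hg ⊢
  set A : ℝ := ∑ k, Complex.abs (c k) with hA
  have hA0 : 0 ≤ A := Finset.sum_nonneg fun k _ => Complex.abs.nonneg _
  have hDb := fun m => Dcard_bound m (n+1)
  have hkron := fun θ ε hε => my_kronecker n lam hindep (by exact_mod_cast hDb) θ (ε := ε) hε
  -- f x rewritten with phases
  have hfx : ∀ x : ℝ, f x = ∑ k, (Complex.abs (c k) : ℂ)
      * cexp (I * ((lam k * x + Complex.arg (c k) : ℝ) : ℂ)) := by
    intro x
    rw [hf x]
    refine Finset.sum_congr rfl fun k _ => ?_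
    have h := Complex.abs_mul_exp_arg_mul_I (c k)
    calc c k * cexp (I * (lam k : ℂ) * (x:ℂ))
        = ((Complex.abs (c k) : ℂ) * cexp ((Complex.arg (c k) : ℂ) * I)) * cexp (I * (lam k : ℂ) * (x:ℂ)) := by
          rw [h]
      _ = (Complex.abs (c k) : ℂ) * cexp (I * ((lam k * x + Complex.arg (c k) : ℝ) : ℂ)) := by
          rw [mul_assoc, ← Complex.exp_add]
          congr 2
          push_cast
          ring
  have hgx : ∀ y : ℝ, g y = ∑ k, (Complex.abs (c k) : ℂ)
      * cexp (I * ((lam k * y : ℝ) : ℂ)) := by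
    intro y
    rw [hg y]
    refine Finset.sum_congr rfl fun k _ => ?_
    congr 1
    congr 1
    push_cast
    ring
  -- generic comparison of two phase-sums
  have hcomp : ∀ (φ χ : Fin n → ℝ) (ε : ℝ), 0 < ε →
      (∀ k, Complex.abs (cexp (I * (φ k : ℂ)) - cexp (I * (χ k : ℂ))) < ε) →
      Complex.abs ((∑ k, (Complex.abs (c k) : ℂ) * cexp (I * (φ k : ℂ)))
        - ∑ k, (Complex.abs (c k) : ℂ) * cexp (I * (χ k : ℂ))) ≤ A * ε := by
    intro φ χ ε hε h
    rw [← Finset.sum_sub_distrib]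
    refine (Complex.abs.sum_le _ _).trans ?_
    rw [hA, Finset.sum_mul]
    refine Finset.sum_le_sum fun k _ => ?_
    rw [← mul_sub, map_mul, Complex.abs_ofReal, _root_.abs_of_nonneg (Complex.abs.nonneg _)]
    exact mul_le_mul_of_nonneg_left (le_of_lt (h k)) (Complex.abs.nonneg _)
  -- approximation in both directions
  have happrox1 : ∀ (x : ℝ) {ε : ℝ}, 0 < ε → ∃ y : ℝ, Complex.abs (f x - g y) < ε := by
    intro x ε hε
    have hε' : 0 < ε / (A + 1) := by positivity
    obtain ⟨y, hy⟩ := hkron (fun k => lam k * x + Complex.arg (c k)) _ hε'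
    refine ⟨y, ?_⟩
    have : Complex.abs (g y - f x) ≤ A * (ε / (A + 1)) := by
      rw [hgx y, hfx x]
      refine hcomp (fun k => lam k * y) (fun k => lam k * x + Complex.arg (c k)) _ hε' ?_
      intro k
      have := hy k
      rw [show I * ((lam k : ℂ)) * (y:ℂ) = I * ((lam k * y : ℝ) : ℂ) by push_cast; ring] at this
      exact this
    rw [← AbsoluteValue.map_sub Complex.abs]
    calc Complex.abs (g y - f x) ≤ A * (ε / (A + 1)) := this
      _ < ε := by
          rw [mul_div_assoc']
          rw [div_lt_iff₀ (by positivity)]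
          nlinarith
  have happrox2 : ∀ (y : ℝ) {ε : ℝ}, 0 < ε → ∃ x : ℝ, Complex.abs (f x - g y) < ε := by
    intro y ε hε
    have hε' : 0 < ε / (A + 1) := by positivity
    obtain ⟨x, hx⟩ := hkron (fun k => lam k * y - Complex.arg (c k)) _ hε'
    refine ⟨x, ?_⟩
    have : Complex.abs (f x - g y) ≤ A * (ε / (A + 1)) := by
      rw [hgx y, hfx x]
      refine hcomp (fun k => lam k * x + Complex.arg (c k))
        (fun k => lam k * y) _ hε' ?_
      intro k
      have h1 := hx k
      have key : Complex.abs (cexp (I * ((lam k * x + Complex.arg (c k) : ℝ) : ℂ))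
          - cexp (I * ((lam k * y : ℝ) : ℂ)))
          = Complex.abs (cexp (I * (lam k : ℂ) * (x:ℂ))
            - cexp (I * ((lam k * y - Complex.arg (c k) : ℝ) : ℂ))) := by
        have hfactor : cexp (I * ((lam k * x + Complex.arg (c k) : ℝ) : ℂ))
            - cexp (I * ((lam k * y : ℝ) : ℂ))
            = (cexp (I * (lam k : ℂ) * (x:ℂ))
              - cexp (I * ((lam k * y - Complex.arg (c k) : ℝ) : ℂ)))
              * cexp (I * ((Complex.arg (c k) : ℝ) : ℂ)) := by
          rw [sub_mul, ← Complex.exp_add, ← Complex.exp_add]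
          congr 2 <;> · push_cast; ring
        rw [hfactor, map_mul]
        have : Complex.abs (cexp (I * ((Complex.arg (c k) : ℝ) : ℂ))) = 1 := by
          simpa using abs_my_exp 0 (Complex.arg (c k)) 0
        rw [this, mul_one]
      rw [key]
      exact h1
    calc Complex.abs (f x - g y) ≤ A * (ε / (A + 1)) := this
      _ < ε := by
          rw [mul_div_assoc']
          rw [div_lt_iff₀ (by positivity)]
          nlinarith
  -- boundedness
  have hboundf : ∀ x, Complex.abs (f x) ≤ A := by
    intro x
    rw [hfx x, hA]
    refine (Complex.abs.sum_le _ _).trans (le_of_eq (Finset.sum_congr rfl fun k _ => ?_))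
    rw [map_mul, Complex.abs_ofReal, _root_.abs_of_nonneg (Complex.abs.nonneg _)]
    have : Complex.abs (cexp (I * ((lam k * x + Complex.arg (c k) : ℝ) : ℂ))) = 1 := by
      simpa using abs_my_exp 0 (lam k * x + Complex.arg (c k)) 0
    rw [this, mul_one]
  have hboundg : ∀ y, Complex.abs (g y) ≤ A := by
    intro y
    rw [hgx y, hA]
    refine (Complex.abs.sum_le _ _).trans (le_of_eq (Finset.sum_congr rfl fun k _ => ?_))
    rw [map_mul, Complex.abs_ofReal, _root_.abs_of_nonneg (Complex.abs.nonneg _)]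
    have : Complex.abs (cexp (I * ((lam k * y : ℝ) : ℂ))) = 1 := by
      simpa using abs_my_exp 0 (lam k * y) 0
    rw [this, mul_one]
  have hbddf : BddAbove (Set.range fun x => Complex.abs (f x)) :=
    ⟨A, by rintro r ⟨x, rfl⟩; exact hboundf x⟩
  have hbddg : BddAbove (Set.range fun y => Complex.abs (g y)) :=
    ⟨A, by rintro r ⟨y, rfl⟩; exact hboundg y⟩
  have hbelf : BddBelow (Set.range fun x => Complex.abs (f x)) :=
    ⟨0, by rintro r ⟨x, rfl⟩; exact Complex.abs.nonneg _⟩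
  have hbelg : BddBelow (Set.range fun y => Complex.abs (g y)) :=
    ⟨0, by rintro r ⟨y, rfl⟩; exact Complex.abs.nonneg _⟩
  constructor
  · apply le_antisymm
    · refine ciSup_le fun x => ?_
      refine le_of_forall_pos_le_add fun ε hε => ?_
      obtain ⟨y, hy⟩ := happrox1 x hε
      have : Complex.abs (f x) ≤ Complex.abs (g y) + ε := by
        have h4 : Complex.abs (f x) ≤ Complex.abs (f x - g y) + Complex.abs (g y) := by
          simpa using Complex.abs.add_le (f x - g y) (g y)
        linarith
      exact this.trans (add_le_add_left (le_ciSup hbddg y) ε)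
    · refine ciSup_le fun y => ?_
      refine le_of_forall_pos_le_add fun ε hε => ?_
      obtain ⟨x, hx⟩ := happrox2 y hε
      have : Complex.abs (g y) ≤ Complex.abs (f x) + ε := by
        have h4 : Complex.abs (g y) ≤ Complex.abs (g y - f x) + Complex.abs (f x) := by
          simpa using Complex.abs.add_le (g y - f x) (f x)
        rw [← AbsoluteValue.map_sub Complex.abs] at hx
        linarith
      exact this.trans (add_le_add_left (le_ciSup hbddf x) ε)
  · apply le_antisymm
    · refine le_ciInf fun y => ?_
      refine le_of_forall_pos_le_add fun ε hε => ?_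
      obtain ⟨x, hx⟩ := happrox2 y hε
      have : Complex.abs (f x) ≤ Complex.abs (g y) + ε := by
        have h4 : Complex.abs (f x) ≤ Complex.abs (f x - g y) + Complex.abs (g y) := by
          simpa using Complex.abs.add_le (f x - g y) (g y)
        linarith
      exact (ciInf_le hbelf x).trans this
    · refine le_ciInf fun x => ?_
      refine le_of_forall_pos_le_add fun ε hε => ?_
      obtain ⟨y, hy⟩ := happrox1 x hε
      have : Complex.abs (g y) ≤ Complex.abs (f x) + ε := by
        have h4 : Complex.abs (g y) ≤ Complex.abs (g y - f x) + Complex.abs (f x) := by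
          simpa using Complex.abs.add_le (g y - f x) (f x)
        rw [← AbsoluteValue.map_sub Complex.abs] at hy
        linarith
      exact (ciInf_le hbelg y).trans this
end

section
/- Let the real numbers λ_1,…,λ_n be linearly independent over the field of rational numbers, let c_1,…,c_n be complex numbers, and let f(x)=∑_{k=1}^n c_k e^{iλ_k x}. Then inf_{x∈ℝ} |f(x)| ≤ min_{ε∈{−1,1}^n} |∑_{k=1}^n ε_k |c_k||. -/
open MeasureTheory Set Submodule
noncomputable section
namespace Kro

abbrev Torus (n : ℕ) := Fin n → Circle
variable {n : ℕ}

def char (m : Fin n → ℤ) : C(Torus n, ℂ) :=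
  ⟨fun z => ∏ k, ((z k ^ m k : Circle) : ℂ),
   continuous_finset_prod _ fun k _ =>
     continuous_subtype_val.comp
       ((continuous_zpow (G := Circle) (m k)).comp (continuous_apply k))⟩

lemma char_apply (m : Fin n → ℤ) (z : Torus n) :
    char m z = ∏ k, ((z k ^ m k : Circle) : ℂ) := rfl

lemma char_zero : char (0 : Fin n → ℤ) = 1 := by
  ext z; simp [char_apply]

lemma char_mul_char (m m' : Fin n → ℤ) : char m * char m' = char (m + m') := by
  ext z
  simp only [ContinuousMap.mul_apply, char_apply, Pi.add_apply, zpow_add]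
  rw [← Finset.prod_mul_distrib]
  simp [Circle.coe_mul]

lemma star_char (m : Fin n → ℤ) : star (char m) = char (-m) := by
  ext z
  simp only [ContinuousMap.star_apply, char_apply, Pi.neg_apply, zpow_neg, star_prod]
  refine Finset.prod_congr rfl fun k _ => ?_
  rw [Complex.star_def, ← Circle.coe_inv_eq_conj, Circle.coe_inv]

lemma char_mul_apply (m : Fin n → ℤ) (g z : Torus n) :
    char m (g * z) = char m g * char m z := by
  simp only [char_apply, Pi.mul_apply, mul_zpow]
  rw [← Finset.prod_mul_distrib]
  simp [Circle.coe_mul]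

def charSubalgebra (n : ℕ) : StarSubalgebra ℂ C(Torus n, ℂ) where
  toSubalgebra := Algebra.adjoin ℂ (range (char (n := n)))
  star_mem' := by
    show Algebra.adjoin ℂ (range (char (n := n))) ≤
      star (Algebra.adjoin ℂ (range (char (n := n))))
    refine Algebra.adjoin_le ?_
    rintro - ⟨m, rfl⟩
    exact Algebra.subset_adjoin ⟨-m, (star_char m).symm⟩

lemma charSubalgebra_coe :
    Subalgebra.toSubmodule (charSubalgebra n).toSubalgebra = span ℂ (range (char (n := n))) := by
  apply Algebra.adjoin_eq_span_of_subset
  refine Subset.trans ?_ Submodule.subset_span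
  intro x hx
  refine Submonoid.closure_induction (fun _ => id) ⟨0, char_zero⟩ ?_ hx
  rintro - - - - ⟨m, rfl⟩ ⟨m', rfl⟩
  exact ⟨m + m', (char_mul_char m m').symm⟩

lemma charSubalgebra_separatesPoints : (charSubalgebra n).SeparatesPoints := by
  intro z w hzw
  obtain ⟨k, hk⟩ : ∃ k, z k ≠ w k := by
    by_contra h
    push_neg at h
    exact hzw (funext h)
  refine ⟨_, ⟨char (Pi.single k 1), Algebra.subset_adjoin ⟨_, rfl⟩, rfl⟩, ?_⟩
  simp only [char_apply]
  rw [Finset.prod_eq_single k (fun j _ hj => by simp [Pi.single_eq_of_ne hj])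
    (by simp), Finset.prod_eq_single k (fun j _ hj => by simp [Pi.single_eq_of_ne hj]) (by simp)]
  simp only [Pi.single_eq_same, zpow_one]
  exact fun h => hk (Circle.coe_injective h)

lemma span_char_dense :
    Dense ((span ℂ (range (char (n := n))) : Submodule ℂ C(Torus n, ℂ)) : Set C(Torus n, ℂ)) := by
  have h := ContinuousMap.starSubalgebra_topologicalClosure_eq_top_of_separatesPoints
    (charSubalgebra n) charSubalgebra_separatesPoints
  have h2 : (span ℂ (range (char (n := n)))).topologicalClosure = ⊤ := by
    rw [← charSubalgebra_coe]
    exact congr_arg (Subalgebra.toSubmodule <| StarSubalgebra.toSubalgebra ·) h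
  have h3 : closure ((span ℂ (range (char (n := n)))) : Set C(Torus n, ℂ)) = univ := by
    rw [← Submodule.topologicalClosure_coe, h2, Submodule.top_coe]
  exact dense_iff_closure_eq.mpr h3

end Kro

namespace Kro
open scoped BoundedContinuousFunction

variable {X : Type*} [TopologicalSpace X] [CompactSpace X] [MeasurableSpace X]
  [OpensMeasurableSpace X]

lemma cm_integrable (μ : Measure X) [IsFiniteMeasure μ] (f : C(X, ℂ)) :
    Integrable f μ := by
  have := BoundedContinuousFunction.integrable μ (BoundedContinuousFunction.mkOfCompact f)
  exact this

def integralCLM (μ : Measure X) [IsFiniteMeasure μ] : C(X, ℂ) →L[ℂ] ℂ :=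
  LinearMap.mkContinuous
    { toFun := fun f => ∫ x, f x ∂μ
      map_add' := fun f g => integral_add (cm_integrable μ f) (cm_integrable μ g)
      map_smul' := fun c f => by simpa using integral_smul c (f : X → ℂ) }
    (μ univ).toReal
    (fun f => by
      have h : ∀ᵐ x ∂μ, ‖f x‖ ≤ ‖f‖ := Filter.Eventually.of_forall fun x => by
        simpa using (BoundedContinuousFunction.mkOfCompact f).norm_coe_le_norm x
      calc ‖∫ x, f x ∂μ‖ ≤ ‖f‖ * (μ univ).toReal := norm_integral_le_of_norm_le_const h
      _ = (μ univ).toReal * ‖f‖ := mul_comm _ _)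

lemma integralCLM_apply (μ : Measure X) [IsFiniteMeasure μ] (f : C(X, ℂ)) :
    integralCLM μ f = ∫ x, f x ∂μ := rfl

end Kro

lemma Circle.coe_zpow' (w : Circle) (m : ℤ) : ((w ^ m : Circle) : ℂ) = (w : ℂ) ^ m := by
  have h := map_zpow Circle.toUnits w m
  have := congrArg (Units.val) h
  simpa [Units.val_zpow_eq_zpow_val] using this

lemma Circle.exp_zpow (t : ℝ) (m : ℤ) : Circle.exp t ^ m = Circle.exp (m * t) := by
  have := map_zsmul Circle.expHom m t
  simpa [zsmul_eq_mul] using this.symm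

namespace Kro
variable {n : ℕ}

section Meas
variable [MeasurableSpace (Torus n)] [BorelSpace (Torus n)]

lemma integral_char_eq_zero {μ : Measure (Torus n)} [IsFiniteMeasure μ] {m : Fin n → ℤ}
    {g : Torus n} (hinv : MeasurePreserving (fun z => g * z) μ μ) (hg : char m g ≠ (1 : ℂ)) :
    ∫ z, char m z ∂μ = 0 := by
  have hemb : MeasurableEmbedding (fun z : Torus n => g * z) :=
    (Homeomorph.mulLeft g).measurableEmbedding
  have h1 : ∫ z, char m (g * z) ∂μ = ∫ z, char m z ∂μ :=
    hinv.integral_comp hemb _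
  have h2 : ∫ z, char m (g * z) ∂μ = char m g * ∫ z, char m z ∂μ := by
    simp_rw [char_mul_apply]
    exact integral_const_mul _ _
  have h3 : (char m g - 1) * ∫ z, char m z ∂μ = 0 := by
    rw [sub_mul, one_mul, ← h2, h1, sub_self]
  rcases mul_eq_zero.mp h3 with h | h
  · exact absurd (by linear_combination h) hg
  · exact h

end Meas

def phi (lam : Fin n → ℝ) (x : ℝ) : Torus n := fun k => Circle.exp (lam k * x)

lemma phi_add (lam : Fin n → ℝ) (x y : ℝ) : phi lam (x + y) = phi lam x * phi lam y := by
  funext k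
  simp [phi, mul_add, Circle.exp_add]

lemma phi_zero (lam : Fin n → ℝ) : phi lam 0 = 1 := by
  funext k; simp [phi]

lemma phi_neg (lam : Fin n → ℝ) (x : ℝ) : phi lam (-x) = (phi lam x)⁻¹ := by
  funext k; simp [phi, mul_comm]

lemma char_phi (m : Fin n → ℤ) (lam : Fin n → ℝ) (x : ℝ) :
    char m (phi lam x) =
      Complex.exp (((∑ k, (m k : ℝ) * lam k : ℝ) : ℂ) * x * Complex.I) := by
  rw [char_apply]
  have : ∀ k, ((phi lam x k ^ m k : Circle) : ℂ)
      = Complex.exp (((m k : ℝ) * lam k : ℝ) * x * Complex.I) := by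
    intro k
    rw [show phi lam x k = Circle.exp (lam k * x) from rfl, Circle.exp_zpow, Circle.coe_exp]
    push_cast
    ring_nf
  simp_rw [this]
  rw [← Complex.exp_sum]
  congr 1
  push_cast
  rw [Finset.sum_mul, Finset.sum_mul]

end Kro

namespace Kro
variable {n : ℕ}
open TopologicalSpace

def phiGroup (lam : Fin n → ℝ) : Subgroup (Torus n) where
  carrier := Set.range (phi lam)
  one_mem' := ⟨0, phi_zero lam⟩
  mul_mem' := by rintro a b ⟨x, rfl⟩ ⟨y, rfl⟩; exact ⟨x + y, phi_add lam x y⟩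
  inv_mem' := by rintro a ⟨x, rfl⟩; exact ⟨-x, phi_neg lam x⟩

theorem dense_phi (lam : Fin n → ℝ)
    (hindep : ∀ r : Fin n → ℚ, (∑ k, (r k : ℝ) * lam k) = 0 → ∀ k, r k = 0) :
    Dense (Set.range (phi lam)) := by
  borelize (Torus n)
  set G := (phiGroup lam).topologicalClosure with hG
  have hGclosed : IsClosed (G : Set (Torus n)) := Subgroup.isClosed_topologicalClosure _
  suffices huniv : (G : Set (Torus n)) = univ by
    have hcl : closure (Set.range (phi lam)) = univ := by
      have h1 : closure ((phiGroup lam : Set (Torus n))) = (G : Set (Torus n)) := rfl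
      exact h1.trans huniv
    exact dense_iff_closure_eq.mpr hcl
  by_contra hne'
  obtain ⟨w, hw⟩ : ∃ w, w ∉ (G : Set (Torus n)) := by
    by_contra h
    push_neg at h
    exact hne' (eq_univ_of_forall h)
  -- set up measures
  haveI : CompactSpace ↥G := isCompact_iff_compactSpace.mp hGclosed.isCompact
  haveI : BorelSpace ↥G := Subtype.borelSpace (G : Set (Torus n))
  set K₀ : PositiveCompacts ↥G := ⊤ with hK₀
  set μH := Measure.haarMeasure K₀ with hμH
  haveI : IsProbabilityMeasure μH := ⟨by
    have := Measure.haarMeasure_self (K₀ := K₀)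
    simpa [hK₀, hμH] using this⟩
  have hι : Measurable ((↑) : ↥G → Torus n) := measurable_subtype_coe
  set μ : Measure (Torus n) := μH.map (↑) with hμ
  haveI : IsProbabilityMeasure μ := Measure.isProbabilityMeasure_map hι.aemeasurable
  set ν := Measure.haarMeasure (⊤ : PositiveCompacts (Torus n)) with hν
  haveI : IsProbabilityMeasure ν := ⟨by
    have := Measure.haarMeasure_self (K₀ := (⊤ : PositiveCompacts (Torus n)))
    simpa using this⟩
  -- invariance of μ
  have hinv : ∀ g, g ∈ G → MeasurePreserving (fun z => g * z) μ μ := by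
    intro g hg
    have hmeas : Measurable fun z : Torus n => g * z :=
      (continuous_const.mul continuous_id).measurable
    have hmeas' : Measurable fun h : ↥G => (⟨g, hg⟩ : ↥G) * h :=
      (continuous_const.mul continuous_id).measurable
    refine ⟨hmeas, ?_⟩
    have hg' : MeasurePreserving (fun h : ↥G => (⟨g, hg⟩ : ↥G) * h) μH μH :=
      measurePreserving_mul_left μH _
    calc μ.map (fun z => g * z) = μH.map ((fun z : Torus n => g * z) ∘ (↑)) :=
          Measure.map_map hmeas hι
    _ = μH.map ((↑) ∘ fun h : ↥G => (⟨g, hg⟩ : ↥G) * h) := rfl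
    _ = (μH.map (fun h : ↥G => (⟨g, hg⟩ : ↥G) * h)).map (↑) := (Measure.map_map hι hmeas').symm
    _ = μH.map (↑) := by rw [hg'.map_eq]
  -- integrals of characters agree
  have key : ∀ m : Fin n → ℤ, ∫ z, char m z ∂μ = ∫ z, char m z ∂ν := by
    intro m
    by_cases hm : m = 0
    · subst hm
      rw [char_zero]
      simp
    · have hs : (∑ k, (m k : ℝ) * lam k) ≠ 0 := by
        intro h0
        apply hm
        funext k
        have h1 : (∑ k, (((fun k => (m k : ℚ)) k : ℝ)) * lam k) = 0 := by
          push_cast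
          exact h0
        have := hindep (fun k => (m k : ℚ)) h1 k
        exact_mod_cast this
      set s := ∑ k, (m k : ℝ) * lam k with hsdef
      set x0 := Real.pi / s with hx0
      have hchar : char m (phi lam x0) = -1 := by
        rw [char_phi]
        have : ((s : ℂ)) * (x0 : ℂ) = (Real.pi : ℂ) := by
          rw [hx0]
          push_cast
          rw [mul_comm]
          exact div_mul_cancel₀ _ (Complex.ofReal_ne_zero.mpr hs)
        rw [← hsdef, this]
        exact Complex.exp_pi_mul_I
      have hne : char m (phi lam x0) ≠ (1 : ℂ) := by
        rw [hchar]; norm_num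
      have hmemG : phi lam x0 ∈ G :=
        (phiGroup lam).le_topologicalClosure ⟨x0, rfl⟩
      rw [integral_char_eq_zero (hinv _ hmemG) hne,
        integral_char_eq_zero (measurePreserving_mul_left ν (phi lam x0)) hne]
  have hCLM : integralCLM μ = integralCLM ν := by
    refine ContinuousLinearMap.ext_on span_char_dense ?_
    rintro - ⟨m, rfl⟩
    rw [integralCLM_apply, integralCLM_apply]
    exact key m
  -- Urysohn function separating w from G
  obtain ⟨F, hF0, hF1, hFmem⟩ :=
    exists_continuous_zero_one_of_isClosed hGclosed (isClosed_singleton (x := w))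
      (by simp [disjoint_singleton_right, hw])
  set Fc : C(Torus n, ℂ) := ⟨fun z => ((F z : ℝ) : ℂ), Complex.continuous_ofReal.comp F.continuous⟩
    with hFc
  have h1 : integralCLM μ Fc = 0 := by
    rw [integralCLM_apply, hμ,
      integral_map hι.aemeasurable (Fc.continuous.aestronglyMeasurable)]
    have hz : ∀ x : ↥G, Fc ((x : Torus n)) = 0 := by
      intro x
      have : F ((x : Torus n)) = 0 := hF0 x.2
      simp [hFc, this]
    simp [hz]
  have hFien : Integrable (fun z => F z) ν :=
    (BoundedContinuousFunction.mkOfCompact F).integrable ν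
  have h2pos : 0 < ∫ z, F z ∂ν := by
    refine (integral_pos_iff_support_of_nonneg (fun z => (hFmem z).1) hFien).mpr ?_
    have hopen : IsOpen (Function.support F) := by
      have : Function.support F = F ⁻¹' ({0}ᶜ) := by
        ext z; simp [Function.mem_support]
      rw [this]
      exact isClosed_singleton.isOpen_compl.preimage F.continuous
    refine hopen.measure_pos ν ⟨w, ?_⟩
    have : F w = 1 := hF1 rfl
    simp [Function.mem_support, this]
  have h3 : integralCLM ν Fc = ((∫ z, F z ∂ν : ℝ) : ℂ) := by
    rw [integralCLM_apply, hFc]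
    exact integral_ofReal
  rw [hCLM, h3] at h1
  have : (∫ z, F z ∂ν) = 0 := by exact_mod_cast h1
  linarith

end Kro

/-- The set of values `|∑ εₖ aₖ|` over all sign choices `εₖ ∈ {-1, 1}`;
its infimum is the partition minimum of the numbers `a k`. -/
def partitionValues (n : ℕ) (a : Fin n → ℝ) : Set ℝ :=
  {m | ∃ ε : Fin n → ℝ, (∀ k, ε k = 1 ∨ ε k = -1) ∧ m = |∑ k, ε k * a k|}

theorem stmt_4 (n : ℕ) (lam : Fin n → ℝ) (c : Fin n → ℂ)
    (hindep : ∀ r : Fin n → ℚ, (∑ k, (r k : ℝ) * lam k) = 0 → ∀ k, r k = 0)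
    (f : ℝ → ℂ)
    (hf : ∀ x : ℝ, f x = ∑ k, c k * Complex.exp (Complex.I * (lam k : ℂ) * (x : ℂ))) :
    (⨅ x : ℝ, ‖f x‖) ≤ sInf (partitionValues n fun k => ‖c k‖) := by
  have hbdd : BddBelow (Set.range fun x : ℝ => ‖f x‖) := by
    refine ⟨0, ?_⟩
    rintro - ⟨x, rfl⟩
    positivity
  refine le_csInf ⟨_, fun _ => 1, fun k => Or.inl rfl, rfl⟩ ?_
  rintro b ⟨ε, hε, rfl⟩
  have habs : ∀ k, ‖(ε k : ℂ)‖ = 1 := by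
    intro k
    rcases hε k with h | h <;> simp [h]
  have hwex : ∀ k, ∃ z : Circle, c k * (z : ℂ) = ((ε k * ‖c k‖ : ℝ) : ℂ) := by
    intro k
    by_cases h : c k = 0
    · exact ⟨1, by simp [h]⟩
    · refine ⟨⟨(ε k : ℂ) * ((‖c k‖ : ℂ) / c k), ?_⟩, ?_⟩
      · refine mem_sphere_zero_iff_norm.2 ?_
        rw [norm_mul, norm_div]
        rw [habs k, Complex.norm_real, norm_norm, one_mul,
          div_self (norm_ne_zero_iff.mpr h)]
      · push_cast
        field_simp
  choose w hwk using hwex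
  set F : C(Kro.Torus n, ℂ) :=
    ⟨fun z => ∑ k, c k * (z k : ℂ),
     continuous_finset_sum _ fun k _ => continuous_const.mul
       (continuous_subtype_val.comp (continuous_apply k))⟩ with hFdef
  have hFw : F w = ((∑ k, ε k * ‖c k‖ : ℝ) : ℂ) := by
    simp only [hFdef, ContinuousMap.coe_mk]
    rw [show (∑ k, c k * ((w k : ℂ))) = ∑ k, ((ε k * ‖c k‖ : ℝ) : ℂ) from
      Finset.sum_congr rfl fun k _ => hwk k]
    push_cast
    ring
  have hfphi : ∀ x : ℝ, f x = F (Kro.phi lam x) := by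
    intro x
    rw [hf]
    simp only [hFdef, ContinuousMap.coe_mk, Kro.phi, Circle.coe_exp]
    refine Finset.sum_congr rfl fun k _ => ?_
    congr 1
    congr 1
    push_cast
    ring
  refine le_of_forall_pos_le_add ?_
  intro δ hδ
  set U := (fun z => ‖F z‖) ⁻¹' (Set.Iio (|∑ k, ε k * ‖c k‖| + δ))
    with hU
  have hUopen : IsOpen U :=
    (continuous_norm.comp F.continuous).isOpen_preimage _ isOpen_Iio
  have hUw : w ∈ U := by
    simp only [hU, Set.mem_preimage, Set.mem_Iio, hFw, Complex.norm_real, Real.norm_eq_abs]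
    linarith
  obtain ⟨y, ⟨x, rfl⟩, hyU⟩ :=
    (Kro.dense_phi lam hindep).exists_mem_open hUopen ⟨w, hUw⟩
  refine (ciInf_le hbdd x).trans ?_
  rw [hfphi x]
  exact le_of_lt hyU
end
end
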